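/- arXiv:1609.04182 — 8 statements merged into one kernel-verified Lean document; each statement's English description precedes it below -/
import Mathlib

section
/- Let T be a finite tree and k ≥ 1. The map sending an unordered pair of vertices {x,y} with d(x,y) = k to the pair {e_x, e_y}, where e_x (resp. e_y) is the edge of the unique x–y path incident to x (resp. y), is a well-defined bijection from the set of unordered vertex pairs at distance k onto the set of unordered edge pairs at distance k−1 (edge distance measured in the line graph). -/
open SimpleGraph Polynomial Finset

/-- Distance between vertices, as a function on unordered pairs. -/
noncomputable def sdist {V : Type*} (G : SimpleGraph V) (p : Sym2 V) : ℕ :=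
  Sym2.lift ⟨G.dist, fun _ _ => SimpleGraph.dist_comm⟩ p

/-- The Hosoya polynomial `H(G,x) = Σ_{k≥0} d(G,k) x^k`, where `d(G,k)` counts
unordered pairs of vertices at distance `k` (so `d(G,0) = |V(G)|`). -/
noncomputable def hosoyaPoly {V : Type*} [Fintype V] [DecidableEq V]
    (G : SimpleGraph V) : Polynomial ℝ :=
  ∑ p : Sym2 V, X ^ sdist G p

/-- The edge-Hosoya polynomial, summing over unordered pairs of edges with the
line-graph distance. -/
noncomputable def edgeHosoyaPoly {V : Type*} [Fintype V] [DecidableEq V]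
    (G : SimpleGraph V) [DecidableRel G.Adj] : Polynomial ℝ :=
  ∑ p : Sym2 G.edgeSet, X ^ sdist G.lineGraph p

/-- The Wiener index: sum of distances over unordered pairs of vertices. -/
noncomputable def wienerIndex {V : Type*} [Fintype V] [DecidableEq V]
    (G : SimpleGraph V) : ℕ :=
  ∑ p : Sym2 V, sdist G p

/-- The edge-Wiener index: sum of line-graph distances over unordered pairs of edges. -/
noncomputable def edgeWienerIndex {V : Type*} [Fintype V] [DecidableEq V]
    (G : SimpleGraph V) [DecidableRel G.Adj] : ℕ :=
  ∑ p : Sym2 G.edgeSet, sdist G.lineGraph p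

/-- The hyper-Wiener index. -/
noncomputable def hyperWiener {V : Type*} [Fintype V] [DecidableEq V]
    (G : SimpleGraph V) : ℝ :=
  (1/2) * ∑ p : Sym2 V, (sdist G p : ℝ) + (1/2) * ∑ p : Sym2 V, (sdist G p : ℝ)^2

/-- The edge-hyper-Wiener index. -/
noncomputable def edgeHyperWiener {V : Type*} [Fintype V] [DecidableEq V]
    (G : SimpleGraph V) [DecidableRel G.Adj] : ℝ :=
  (1/2) * ∑ p : Sym2 G.edgeSet, (sdist G.lineGraph p : ℝ) +
  (1/2) * ∑ p : Sym2 G.edgeSet, (sdist G.lineGraph p : ℝ)^2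

namespace TreeBij

open SimpleGraph

variable {V : Type*} {T : SimpleGraph V}

lemma sdist_mk (G : SimpleGraph V) (x y : V) : sdist G s(x, y) = G.dist x y := rfl

lemma path_length_eq (hT : T.IsTree) {x y : V} {p : T.Walk x y} (hp : p.IsPath) :
    p.length = T.dist x y := by
  obtain ⟨q, hq, hl⟩ := hT.isConnected.exists_path_of_dist x y
  rw [← hl, (hT.existsUnique_path x y).unique hp hq]

lemma exists_next (hc : T.Connected) {x y : V} {n : ℕ} (h : T.dist x y = n + 1) :
    ∃ x', T.Adj x x' ∧ T.dist x' y = n := by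
  obtain ⟨p, hl⟩ := hc.exists_walk_length_eq_dist x y
  have hn : ¬ p.Nil := by rw [SimpleGraph.Walk.nil_iff_length_eq]; omega
  refine ⟨p.getVert 1, p.adj_snd hn, ?_⟩
  have h1 : T.dist (p.getVert 1) y ≤ n := by
    have : T.dist (p.getVert 1) y ≤ p.tail.length := SimpleGraph.dist_le p.tail
    have := SimpleGraph.Walk.length_tail_add_one hn
    omega
  have h2 : T.dist x y ≤ T.dist x (p.getVert 1) + T.dist (p.getVert 1) y :=
    hc.dist_triangle
  have h3 : T.dist x (p.getVert 1) = 1 :=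
    SimpleGraph.dist_eq_one_iff_adj.mpr (p.adj_snd hn)
  omega

lemma next_unique (hT : T.IsTree) {x y a b : V} {n : ℕ} (h : T.dist x y = n + 1)
    (ha1 : T.Adj x a) (ha2 : T.dist a y = n) (hb1 : T.Adj x b) (hb2 : T.dist b y = n) :
    a = b := by
  obtain ⟨pa, hpa, hla⟩ := hT.isConnected.exists_path_of_dist a y
  obtain ⟨pb, hpb, hlb⟩ := hT.isConnected.exists_path_of_dist b y
  have hqa : (SimpleGraph.Walk.cons ha1 pa).IsPath := by
    apply SimpleGraph.Walk.isPath_of_length_eq_dist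
    simp [hla, ha2, h]
  have hqb : (SimpleGraph.Walk.cons hb1 pb).IsPath := by
    apply SimpleGraph.Walk.isPath_of_length_eq_dist
    simp [hlb, hb2, h]
  have := (hT.existsUnique_path x y).unique hqa hqb
  have := congrArg (fun w => SimpleGraph.Walk.getVert w 1) this
  simpa using this

lemma inner_dist (hT : T.IsTree) {x y x' y' : V} {k : ℕ} (hk : 2 ≤ k)
    (h : T.dist x y = k) (hx : T.Adj x x') (hxd : T.dist x' y = k - 1)
    (hy : T.Adj y y') (hyd : T.dist y' x = k - 1) :
    T.dist x' y' = k - 2 := by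
  have hxy' : T.dist x y' = k - 1 := by rw [SimpleGraph.dist_comm]; exact hyd
  have h2 : T.dist x y' = (k - 2) + 1 := by omega
  obtain ⟨z, hz, hzd⟩ := exists_next hT.isConnected h2
  have hy'y : T.dist y' y = 1 := SimpleGraph.dist_eq_one_iff_adj.mpr (hy.symm)
  have hzy : T.dist z y = k - 1 := by
    have t1 : T.dist z y ≤ T.dist z y' + T.dist y' y := hT.isConnected.dist_triangle
    have t2 : T.dist x y ≤ T.dist x z + T.dist z y := hT.isConnected.dist_triangle
    have t3 : T.dist x z = 1 := SimpleGraph.dist_eq_one_iff_adj.mpr hz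
    omega
  have hzx' : z = x' := next_unique hT (by omega : T.dist x y = (k-1) + 1) hz hzy hx hxd
  rw [← hzx']
  exact hzd

lemma exists_lineWalk {x y : V} (p : T.Walk x y) (hp : p.IsPath) (hn : ¬ p.Nil)
    (e f : T.edgeSet) (he : (e : Sym2 V) = s(x, p.getVert 1))
    (hf : (f : Sym2 V) = s(p.getVert (p.length - 1), y)) :
    ∃ w : T.lineGraph.Walk e f, w.length = p.length - 1 := by
  induction p generalizing e f with
  | nil => simp at hn
  | @cons x b y h q ih =>
    by_cases hq : q.Nil
    · have hl : q.length = 0 := SimpleGraph.Walk.nil_iff_length_eq.mp hq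
      have hby : b = y := by
        cases q with
        | nil => rfl
        | cons h' q' => simp [SimpleGraph.Walk.length_cons] at hl
      have hef : e = f := by
        apply Subtype.ext
        rw [he, hf]
        simp only [SimpleGraph.Walk.length_cons, hl]
        rw [SimpleGraph.Walk.getVert_cons_succ]
        simp [SimpleGraph.Walk.getVert_zero, hby]
      subst hef
      exact ⟨SimpleGraph.Walk.nil, by simp [SimpleGraph.Walk.length_cons, hl]⟩
    · have hq1 : 1 ≤ q.length := by
        rw [SimpleGraph.Walk.nil_iff_length_eq] at hq; omega
      have hqp : q.IsPath := ((SimpleGraph.Walk.cons_isPath_iff _ _).mp hp).1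
      have hxs : x ∉ q.support := ((SimpleGraph.Walk.cons_isPath_iff _ _).mp hp).2
      have hadj : T.Adj b (q.getVert 1) := q.adj_snd hq
      set e' : T.edgeSet := ⟨s(b, q.getVert 1), T.mem_edgeSet.mpr hadj⟩ with he'
      have hf' : (f : Sym2 V) = s(q.getVert (q.length - 1), y) := by
        rw [hf]
        congr 1
        simp only [SimpleGraph.Walk.length_cons]
        have : q.length - 1 + 1 = q.length := by omega
        rw [Nat.add_sub_cancel]
        conv_lhs => rw [← this]
        rw [SimpleGraph.Walk.getVert_cons_succ]
      obtain ⟨w, hw⟩ := ih hqp hq e' f rfl hf'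
      have hA : T.lineGraph.Adj e e' := by
        constructor
        · intro hee
          have : s(x, b) = s(b, q.getVert 1) := by
            have := congrArg (Subtype.val) hee
            rw [he] at this
            simpa [he', SimpleGraph.Walk.getVert_cons_succ, SimpleGraph.Walk.getVert_zero] using this
          rw [Sym2.eq_iff] at this
          rcases this with ⟨h1, h2⟩ | ⟨h1, h2⟩
          · exact h.ne h1
          · refine hxs ?_
            rw [SimpleGraph.Walk.mem_support_iff_exists_getVert]
            exact ⟨1, h1.symm, by omega⟩
        · refine ⟨b, ?_, ?_⟩
          · simp [he, SimpleGraph.Walk.getVert_cons_succ, SimpleGraph.Walk.getVert_zero]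
          · simp [he']
      refine ⟨SimpleGraph.Walk.cons hA w, ?_⟩
      simp only [SimpleGraph.Walk.length_cons, hw]
      omega

lemma dist_le_one_of_mem (e : T.edgeSet) {a b : V}
    (ha : a ∈ (e : Sym2 V)) (hb : b ∈ (e : Sym2 V)) : T.dist a b ≤ 1 := by
  obtain ⟨e1, he1⟩ := e
  induction e1 using Sym2.ind with
  | _ u v =>
    have huv : T.Adj u v := T.mem_edgeSet.mp he1
    simp only [Sym2.mem_iff] at ha hb
    rcases ha with rfl | rfl <;> rcases hb with rfl | rfl
    · simp [SimpleGraph.dist_self]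
    · exact le_of_eq (SimpleGraph.dist_eq_one_iff_adj.mpr huv)
    · exact le_of_eq (SimpleGraph.dist_eq_one_iff_adj.mpr huv.symm)
    · simp [SimpleGraph.dist_self]

lemma dist_le_lineWalk (hc : T.Connected) {e f : T.edgeSet} (w : T.lineGraph.Walk e f)
    {a b : V} (ha : a ∈ (e : Sym2 V)) (hb : b ∈ (f : Sym2 V)) :
    T.dist a b ≤ w.length + 1 := by
  induction w generalizing a with
  | nil => exact (dist_le_one_of_mem _ ha hb).trans (by omega)
  | @cons e e' f hA w ih =>
    obtain ⟨hne, c, hc1, hc2⟩ := SimpleGraph.lineGraph_adj_iff_exists.mp hA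
    have t1 : T.dist a b ≤ T.dist a c + T.dist c b := hc.dist_triangle
    have t2 : T.dist a c ≤ 1 := dist_le_one_of_mem e ha hc1
    have t3 : T.dist c b ≤ w.length + 1 := ih hc2 hb
    simp only [SimpleGraph.Walk.length_cons]
    omega

lemma S_full [DecidableEq V] (hT : T.IsTree) {a b c d : V} (hab : T.Adj a b) (hcd : T.Adj c d)
    (hef : s(a, b) ≠ s(c, d))
    (h1 : T.dist b c ≤ T.dist a c) (h2 : T.dist b c ≤ T.dist b d)
    (e f : T.edgeSet) (he : (e : Sym2 V) = s(a, b)) (hf : (f : Sym2 V) = s(c, d)) :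
    T.dist a d = T.dist b c + 2 ∧ T.dist a c = T.dist b c + 1 ∧
    T.dist b d = T.dist b c + 1 ∧ T.lineGraph.dist e f = T.dist b c + 1 := by
  obtain ⟨P, hP, hPl⟩ := hT.isConnected.exists_path_of_dist b c
  have hanotin : a ∉ P.support := by
    intro haP
    have hsplit := congrArg SimpleGraph.Walk.length (P.take_spec haP)
    rw [SimpleGraph.Walk.length_append] at hsplit
    have t1 : T.dist b a ≤ (P.takeUntil a haP).length := SimpleGraph.dist_le _
    have t2 : T.dist a c ≤ (P.dropUntil a haP).length := SimpleGraph.dist_le _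
    have t3 : T.dist b a = 1 := SimpleGraph.dist_eq_one_iff_adj.mpr hab.symm
    omega
  have hdnotin : d ∉ P.support := by
    intro hdP
    have hsplit := congrArg SimpleGraph.Walk.length (P.take_spec hdP)
    rw [SimpleGraph.Walk.length_append] at hsplit
    have t1 : T.dist b d ≤ (P.takeUntil d hdP).length := SimpleGraph.dist_le _
    have t2 : T.dist d c ≤ (P.dropUntil d hdP).length := SimpleGraph.dist_le _
    have t3 : T.dist d c = 1 := SimpleGraph.dist_eq_one_iff_adj.mpr hcd.symm
    omega
  have had : a ≠ d := by
    rintro rfl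
    have hbc : b ≠ c := by
      rintro rfl
      exact hef Sym2.eq_swap
    have hR : (SimpleGraph.Walk.cons hab.symm
        (SimpleGraph.Walk.cons hcd.symm SimpleGraph.Walk.nil)).IsPath := by
      rw [SimpleGraph.Walk.isPath_def]
      simp [hab.ne', hbc, hcd.ne']
    have hPR := (hT.existsUnique_path b c).unique hP hR
    apply hanotin
    rw [hPR]
    simp
  have hPc : (P.concat hcd).IsPath := by
    rw [SimpleGraph.Walk.isPath_def, SimpleGraph.Walk.support_concat,
      List.nodup_append]
    refine ⟨hP.support_nodup, List.nodup_singleton d, fun x hx y hx2 => ?_⟩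
    simp only [List.mem_singleton] at hx2
    subst hx2
    exact fun h => hdnotin (h ▸ hx)
  have haPc : a ∉ (P.concat hcd).support := by
    rw [SimpleGraph.Walk.support_concat]
    simp only [List.mem_append, List.mem_singleton]
    rintro (h | h)
    · exact hanotin h
    · exact had h
  have hQ : (SimpleGraph.Walk.cons hab (P.concat hcd)).IsPath :=
    (SimpleGraph.Walk.cons_isPath_iff _ _).mpr ⟨hPc, haPc⟩
  have hQl : (SimpleGraph.Walk.cons hab (P.concat hcd)).length = T.dist b c + 2 := by
    simp [SimpleGraph.Walk.length_concat, hPl]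
  have had2 : T.dist a d = T.dist b c + 2 := by
    rw [← path_length_eq hT hQ]; exact hQl
  have hac : T.dist a c = T.dist b c + 1 := by
    have hp' : (SimpleGraph.Walk.cons hab P).IsPath :=
      (SimpleGraph.Walk.cons_isPath_iff _ _).mpr ⟨hP, hanotin⟩
    rw [← path_length_eq hT hp']
    simp [hPl]
  have hbd : T.dist b d = T.dist b c + 1 := by
    rw [← path_length_eq hT hPc]
    simp [SimpleGraph.Walk.length_concat, hPl]
  have hgv1 : (SimpleGraph.Walk.cons hab (P.concat hcd)).getVert 1 = b := by
    rw [SimpleGraph.Walk.getVert_cons_succ, SimpleGraph.Walk.getVert_zero]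
  have hgv2 : (SimpleGraph.Walk.cons hab (P.concat hcd)).getVert
      ((SimpleGraph.Walk.cons hab (P.concat hcd)).length - 1) = c := by
    rw [hQl]
    have : T.dist b c + 2 - 1 = (T.dist b c) + 1 := by omega
    rw [this, SimpleGraph.Walk.getVert_cons_succ, SimpleGraph.Walk.concat_eq_append,
      SimpleGraph.Walk.getVert_append]
    rw [hPl]
    simp
  obtain ⟨w, hw⟩ := exists_lineWalk (SimpleGraph.Walk.cons hab (P.concat hcd)) hQ
    (by rw [SimpleGraph.Walk.nil_iff_length_eq, hQl]; omega) e f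
    (by rw [he, hgv1]) (by rw [hf, hgv2])
  have hle : T.lineGraph.dist e f ≤ T.dist b c + 1 := by
    have := SimpleGraph.dist_le w
    rw [hw, hQl] at this
    omega
  have hge : T.dist b c + 1 ≤ T.lineGraph.dist e f := by
    obtain ⟨w', hw'⟩ := (SimpleGraph.Walk.reachable w).exists_walk_length_eq_dist
    have := dist_le_lineWalk hT.isConnected w' (a := a) (b := d)
      (by rw [he]; simp) (by rw [hf]; simp)
    rw [hw'] at this
    omega
  exact ⟨had2, hac, hbd, le_antisymm hle hge⟩

def Rel (T : SimpleGraph V) (k : ℕ) (p : Sym2 V) (q : Sym2 T.edgeSet) : Prop :=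
  ∃ (x y x' y' : V) (hx : T.Adj x x') (hy : T.Adj y y'),
    p = s(x, y) ∧ T.dist x' y = k - 1 ∧ T.dist y' x = k - 1 ∧
    q = s(⟨s(x, x'), T.mem_edgeSet.mpr hx⟩, ⟨s(y, y'), T.mem_edgeSet.mpr hy⟩)

lemma rel_exists [DecidableEq V] (hT : T.IsTree) {k : ℕ} (hk : 1 ≤ k) {p : Sym2 V}
    (hp : sdist T p = k) : ∃ q, Rel T k p q ∧ sdist T.lineGraph q = k - 1 := by
  induction p using Sym2.ind with
  | _ x y =>
    have hd : T.dist x y = k := hp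
    have hd2 : T.dist y x = (k - 1) + 1 := by rw [SimpleGraph.dist_comm]; omega
    obtain ⟨x', hx, hxd⟩ := exists_next hT.isConnected (show T.dist x y = (k-1)+1 by omega)
    obtain ⟨y', hy, hyd⟩ := exists_next hT.isConnected hd2
    refine ⟨_, ⟨x, y, x', y', hx, hy, rfl, hxd, hyd, rfl⟩, ?_⟩
    show T.lineGraph.dist _ _ = k - 1
    by_cases hk2 : 2 ≤ k
    · have hin : T.dist x' y' = k - 2 := inner_dist hT hk2 hd hx hxd hy hyd
      have hne : s(x, x') ≠ s(y', y) := by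
        intro h
        rcases Sym2.eq_iff.mp h with ⟨h1, h2⟩ | ⟨h1, h2⟩
        · rw [← h1, SimpleGraph.dist_self] at hyd; omega
        · rw [h1, SimpleGraph.dist_self] at hd; omega
      have hxy' : T.dist x y' = k - 1 := by rw [SimpleGraph.dist_comm]; exact hyd
      have := S_full hT hx hy.symm hne (by omega) (by omega)
        ⟨s(x, x'), T.mem_edgeSet.mpr hx⟩ ⟨s(y, y'), T.mem_edgeSet.mpr hy⟩
        rfl Sym2.eq_swap
      rw [this.2.2.2, hin]
      omega
    · have hk1 : k = 1 := by omega
      have hx'y : x' = y := hT.isConnected.dist_eq_zero_iff.mp (by omega)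
      have hy'x : y' = x := hT.isConnected.dist_eq_zero_iff.mp (by omega)
      have hee : (⟨s(x, x'), T.mem_edgeSet.mpr hx⟩ : T.edgeSet) =
          ⟨s(y, y'), T.mem_edgeSet.mpr hy⟩ := by
        apply Subtype.ext
        show s(x, x') = s(y, y')
        rw [hx'y, hy'x]
        exact Sym2.eq_swap
      rw [hee, SimpleGraph.dist_self]
      omega

lemma rel_unique (hT : T.IsTree) {k : ℕ} (hk : 1 ≤ k) {p : Sym2 V} {q q' : Sym2 T.edgeSet}
    (hp : sdist T p = k) (h : Rel T k p q) (h' : Rel T k p q') : q = q' := by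
  obtain ⟨x, y, x', y', hx, hy, rfl, hxd, hyd, rfl⟩ := h
  obtain ⟨u, v, u', v', hu, hv, hpe, hud, hvd, rfl⟩ := h'
  have hd : T.dist x y = k := hp
  rcases Sym2.eq_iff.mp hpe with ⟨rfl, rfl⟩ | ⟨rfl, rfl⟩
  · have e1 : u' = x' := next_unique hT (show T.dist x y = (k-1)+1 by omega) hu hud hx hxd
    have e2 : v' = y' := next_unique hT
      (show T.dist y x = (k-1)+1 by rw [SimpleGraph.dist_comm]; omega) hv hvd hy hyd
    subst e1; subst e2; rfl
  · have e1 : u' = y' := next_unique hT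
      (show T.dist y x = (k-1)+1 by rw [SimpleGraph.dist_comm]; omega) hu hud hy hyd
    have e2 : v' = x' := next_unique hT (show T.dist x y = (k-1)+1 by omega) hv hvd hx hxd
    subst e1; subst e2
    exact Sym2.eq_swap

lemma inj_core (hT : T.IsTree) {k : ℕ} (hk : 1 ≤ k) {x y x' y' u v u' v' : V}
    (hd : T.dist x y = k) (hx : T.Adj x x') (hxd : T.dist x' y = k - 1)
    (hy : T.Adj y y') (hyd : T.dist y' x = k - 1)
    (hd' : T.dist u v = k) (hu : T.Adj u u') (hud : T.dist u' v = k - 1)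
    (hv : T.Adj v v') (hvd : T.dist v' u = k - 1)
    (h1 : s(x, x') = s(u, u')) (h2 : s(y, y') = s(v, v')) :
    s(x, y) = s(u, v) := by
  rcases Sym2.eq_iff.mp h1 with ⟨hxu, hx'u'⟩ | ⟨hxu', hx'u⟩
  · rcases Sym2.eq_iff.mp h2 with ⟨hyv, _⟩ | ⟨hyv', hy'v⟩
    · rw [hxu, hyv]
    · exfalso
      subst hxu; subst hyv'
      rw [← hy'v] at hd'
      rw [SimpleGraph.dist_comm] at hvd
      rw [SimpleGraph.dist_comm] at hyd
      omega
  · subst hxu'; subst hx'u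
    rcases Sym2.eq_iff.mp h2 with ⟨hyv, _⟩ | ⟨hyv', hy'v⟩
    · exfalso
      subst hyv
      omega
    · subst hyv'; subst hy'v
      by_cases hk2 : 2 ≤ k
      · exfalso
        have := inner_dist hT hk2 hd hx hxd hy hyd
        omega
      · have hk1 : k = 1 := by omega
        have hx'y : x' = y := hT.isConnected.dist_eq_zero_iff.mp (by omega)
        have hy'x : y' = x := hT.isConnected.dist_eq_zero_iff.mp (by omega)
        rw [hx'y, hy'x]
        exact Sym2.eq_swap

lemma rel_inj (hT : T.IsTree) {k : ℕ} (hk : 1 ≤ k) {p p' : Sym2 V} {q : Sym2 T.edgeSet}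
    (hp : sdist T p = k) (hp' : sdist T p' = k)
    (h : Rel T k p q) (h' : Rel T k p' q) : p = p' := by
  obtain ⟨x, y, x', y', hx, hy, rfl, hxd, hyd, hq⟩ := h
  obtain ⟨u, v, u', v', hu, hv, rfl, hud, hvd, hq'⟩ := h'
  have hd : T.dist x y = k := hp
  have hd' : T.dist u v = k := hp'
  have hqq := hq.symm.trans hq'
  rcases Sym2.eq_iff.mp hqq with ⟨h1, h2⟩ | ⟨h1, h2⟩
  · exact inj_core hT hk hd hx hxd hy hyd hd' hu hud hv hvd
      (congrArg Subtype.val h1) (congrArg Subtype.val h2)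
  · have := inj_core hT hk hd hx hxd hy hyd
      (show T.dist v u = k by rw [SimpleGraph.dist_comm]; exact hd') hv hvd hu hud
      (congrArg Subtype.val h1) (congrArg Subtype.val h2)
    rw [this]
    exact Sym2.eq_swap

lemma exists_pair [DecidableEq V] (hT : T.IsTree) (e f : T.edgeSet) :
    ∃ (x y x' y' : V) (hx : T.Adj x x') (hy : T.Adj y y'),
      (e : Sym2 V) = s(x, x') ∧ (f : Sym2 V) = s(y, y') ∧
      T.dist x y = T.lineGraph.dist e f + 1 ∧
      T.dist x' y = T.lineGraph.dist e f ∧ T.dist y' x = T.lineGraph.dist e f := by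
  obtain ⟨a, b, hea⟩ : ∃ a b, (e : Sym2 V) = s(a, b) := by
    induction (e : Sym2 V) using Sym2.ind with
    | _ a b => exact ⟨a, b, rfl⟩
  obtain ⟨c, d, hfc⟩ : ∃ c d, (f : Sym2 V) = s(c, d) := by
    induction (f : Sym2 V) using Sym2.ind with
    | _ c d => exact ⟨c, d, rfl⟩
  have hab : T.Adj a b := T.mem_edgeSet.mp (hea ▸ e.2)
  have hcd : T.Adj c d := T.mem_edgeSet.mp (hfc ▸ f.2)
  by_cases hef : e = f
  · subst hef
    have hdl : T.lineGraph.dist e e = 0 := SimpleGraph.dist_self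
    have hba : (e : Sym2 V) = s(b, a) := hea.trans Sym2.eq_swap
    refine ⟨a, b, b, a, hab, hab.symm, hea, hba, ?_, ?_, ?_⟩
    · rw [hdl, SimpleGraph.dist_eq_one_iff_adj]; exact hab
    · rw [hdl, SimpleGraph.dist_self]
    · rw [hdl, SimpleGraph.dist_self]
  · have hef' : s(a, b) ≠ s(c, d) := fun h => hef (Subtype.ext (hea.trans (h.trans hfc.symm)))
    have hmin : (T.dist b c ≤ T.dist a c ∧ T.dist b c ≤ T.dist b d) ∨
        (T.dist a c ≤ T.dist b c ∧ T.dist a c ≤ T.dist a d) ∨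
        (T.dist b d ≤ T.dist a d ∧ T.dist b d ≤ T.dist b c) ∨
        (T.dist a d ≤ T.dist b d ∧ T.dist a d ≤ T.dist a c) := by omega
    rcases hmin with ⟨m1, m2⟩ | ⟨m1, m2⟩ | ⟨m1, m2⟩ | ⟨m1, m2⟩
    · obtain ⟨D1, D2, D3, D4⟩ := S_full hT hab hcd hef' m1 m2 e f hea hfc
      exact ⟨a, d, b, c, hab, hcd.symm, hea, hfc.trans Sym2.eq_swap,
        by rw [D1, D4], by rw [D3, D4], by rw [SimpleGraph.dist_comm, D2, D4]⟩
    · have hef2 : s(b, a) ≠ s(c, d) := fun h => hef' (Sym2.eq_swap.trans h)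
      obtain ⟨D1, D2, D3, D4⟩ := S_full hT hab.symm hcd hef2 m1 m2 e f
        (hea.trans Sym2.eq_swap) hfc
      exact ⟨b, d, a, c, hab.symm, hcd.symm, hea.trans Sym2.eq_swap, hfc.trans Sym2.eq_swap,
        by rw [D1, D4], by rw [D3, D4], by rw [SimpleGraph.dist_comm, D2, D4]⟩
    · have hef3 : s(a, b) ≠ s(d, c) := fun h => hef' (h.trans Sym2.eq_swap)
      obtain ⟨D1, D2, D3, D4⟩ := S_full hT hab hcd.symm hef3 m1 m2 e f hea
        (hfc.trans Sym2.eq_swap)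
      exact ⟨a, c, b, d, hab, hcd, hea, hfc,
        by rw [D1, D4], by rw [D3, D4], by rw [SimpleGraph.dist_comm, D2, D4]⟩
    · have hef4 : s(b, a) ≠ s(d, c) := fun h => hef' (Sym2.eq_swap.trans (h.trans Sym2.eq_swap))
      obtain ⟨D1, D2, D3, D4⟩ := S_full hT hab.symm hcd.symm hef4 m1 m2 e f
        (hea.trans Sym2.eq_swap) (hfc.trans Sym2.eq_swap)
      exact ⟨b, c, a, d, hab.symm, hcd, hea.trans Sym2.eq_swap, hfc,
        by rw [D1, D4], by rw [D3, D4], by rw [SimpleGraph.dist_comm, D2, D4]⟩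

lemma rel_surj [DecidableEq V] (hT : T.IsTree) {k : ℕ} (hk : 1 ≤ k) {q : Sym2 T.edgeSet}
    (hq : sdist T.lineGraph q = k - 1) : ∃ p, sdist T p = k ∧ Rel T k p q := by
  induction q using Sym2.ind with
  | _ e f =>
    have hd : T.lineGraph.dist e f = k - 1 := hq
    obtain ⟨x, y, x', y', hx, hy, he, hf, h1, h2, h3⟩ := exists_pair hT e f
    refine ⟨s(x, y), show T.dist x y = k by omega,
      x, y, x', y', hx, hy, rfl, by omega, by omega, ?_⟩
    have he2 : e = ⟨s(x, x'), T.mem_edgeSet.mpr hx⟩ := Subtype.ext he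
    have hf2 : f = ⟨s(y, y'), T.mem_edgeSet.mpr hy⟩ := Subtype.ext hf
    rw [he2, hf2]

end TreeBij


/-- For a finite tree `T` and `k ≥ 1`, the map sending an unordered
pair of vertices at distance `k` to the pair of end edges of the unique path
between them is a well-defined bijection onto the unordered pairs of edges at
line-graph distance `k - 1`. -/
theorem stmt0 {V : Type*} [Fintype V] [DecidableEq V] (T : SimpleGraph V)
    [DecidableRel T.Adj] (hT : T.IsTree) (k : ℕ) (hk : 1 ≤ k) :
    ∃ F : {p : Sym2 V // sdist T p = k} ≃
          {q : Sym2 T.edgeSet // sdist T.lineGraph q = k - 1},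
      ∀ (x y x' y' : V) (hxy : sdist T s(x, y) = k)
        (hx : T.Adj x x') (hx' : T.dist x' y = k - 1)
        (hy : T.Adj y y') (hy' : T.dist y' x = k - 1)
        (hq : sdist T.lineGraph
          s((⟨s(x, x'), T.mem_edgeSet.mpr hx⟩ : T.edgeSet),
            (⟨s(y, y'), T.mem_edgeSet.mpr hy⟩ : T.edgeSet)) = k - 1),
        F ⟨s(x, y), hxy⟩ =
          ⟨s((⟨s(x, x'), T.mem_edgeSet.mpr hx⟩ : T.edgeSet),
             (⟨s(y, y'), T.mem_edgeSet.mpr hy⟩ : T.edgeSet)), hq⟩ := by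
    classical
  have key : ∀ p : {p : Sym2 V // sdist T p = k}, ∃ q : Sym2 T.edgeSet,
      TreeBij.Rel T k p.1 q ∧ sdist T.lineGraph q = k - 1 :=
    fun p => TreeBij.rel_exists hT hk p.2
  choose Φ hΦ1 hΦ2 using key
  have hinj : Function.Injective
      (fun p : {p : Sym2 V // sdist T p = k} =>
        (⟨Φ p, hΦ2 p⟩ : {q : Sym2 T.edgeSet // sdist T.lineGraph q = k - 1})) := by
    intro p1 p2 h
    have hq : Φ p1 = Φ p2 := congrArg Subtype.val h
    exact Subtype.ext (TreeBij.rel_inj hT hk p1.2 p2.2 (hΦ1 p1) (hq ▸ hΦ1 p2))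
  have hsurj : Function.Surjective
      (fun p : {p : Sym2 V // sdist T p = k} =>
        (⟨Φ p, hΦ2 p⟩ : {q : Sym2 T.edgeSet // sdist T.lineGraph q = k - 1})) := by
    rintro ⟨q, hq⟩
    obtain ⟨p, hp, hrel⟩ := TreeBij.rel_surj hT hk hq
    exact ⟨⟨p, hp⟩, Subtype.ext (TreeBij.rel_unique hT hk hp (hΦ1 ⟨p, hp⟩) hrel)⟩
  refine ⟨Equiv.ofBijective _ ⟨hinj, hsurj⟩, ?_⟩
  intro x y x' y' hxy hx hx' hy hy' hq
  apply Subtype.ext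
  show Φ ⟨s(x, y), hxy⟩ = _
  exact TreeBij.rel_unique hT hk hxy (hΦ1 ⟨s(x, y), hxy⟩)
    ⟨x, y, x', y', hx, hy, rfl, hx', hy', rfl⟩
end

section
/- Let T be a finite tree with at least one edge. For every k ≥ 1, the number of unordered pairs of vertices of T at distance k equals the number of unordered pairs of edges of T at edge-distance k−1; that is, d(T,k) = d_e(T,k−1). -/
open SimpleGraph Polynomial Finset

namespace TreeHosoya
open SimpleGraph Walk

variable {V : Type*} {T : SimpleGraph V}

noncomputable def geod (hT : T.IsTree) (x y : V) : T.Walk x y :=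
  (hT.isConnected.exists_path_of_dist x y).choose

lemma geod_isPath (hT : T.IsTree) (x y : V) : (geod hT x y).IsPath :=
  (hT.isConnected.exists_path_of_dist x y).choose_spec.1

lemma geod_length (hT : T.IsTree) (x y : V) : (geod hT x y).length = T.dist x y :=
  (hT.isConnected.exists_path_of_dist x y).choose_spec.2

lemma path_eq_geod (hT : T.IsTree) {x y : V} (p : T.Walk x y) (hp : p.IsPath) :
    p = geod hT x y :=
  congrArg Subtype.val (hT.2.path_unique ⟨p, hp⟩ ⟨geod hT x y, geod_isPath hT x y⟩)

lemma path_length (hT : T.IsTree) {x y : V} (p : T.Walk x y) (hp : p.IsPath) :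
    p.length = T.dist x y := by
  rw [path_eq_geod hT p hp, geod_length]

lemma geod_reverse (hT : T.IsTree) (x y : V) : (geod hT x y).reverse = geod hT y x :=
  path_eq_geod hT _ (geod_isPath hT x y).reverse

/-- The next vertex from `x` on the way to `y`. -/
noncomputable def nxt (hT : T.IsTree) (x y : V) : V := (geod hT x y).getVert 1

lemma adj_nxt (hT : T.IsTree) {x y : V} (hxy : x ≠ y) : T.Adj x (nxt hT x y) :=
  Walk.adj_snd (Walk.not_nil_of_ne hxy)

lemma nxt_eq (hT : T.IsTree) {x y : V} (p : T.Walk x y) (hp : p.IsPath) :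
    nxt hT x y = p.getVert 1 := by
  rw [nxt, ← path_eq_geod hT p hp]

lemma dist_nxt (hT : T.IsTree) {x y : V} (hxy : x ≠ y) :
    T.dist (nxt hT x y) y + 1 = T.dist x y := by
  have hn : ¬ (geod hT x y).Nil := Walk.not_nil_of_ne hxy
  have htp : (geod hT x y).tail.IsPath := by
    have h := geod_isPath hT x y
    rw [← Walk.cons_tail_eq _ hn] at h
    exact h.of_cons
  have h1 : (geod hT x y).tail.length = T.dist (nxt hT x y) y := path_length hT _ htp
  have h2 := Walk.length_tail_add_one hn
  rw [geod_length] at h2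
  rw [← h1, h2]

/-- Two distinct members of an edge are adjacent. -/
lemma adj_of_mem_mem {e : Sym2 V} (heS : e ∈ T.edgeSet) {u v : V}
    (hu : u ∈ e) (hv : v ∈ e) (hne : u ≠ v) : T.Adj u v := by
  induction e using Sym2.ind with
  | _ a b =>
    rw [Sym2.mem_iff] at hu hv
    rw [SimpleGraph.mem_edgeSet] at heS
    rcases hu with rfl | rfl <;> rcases hv with rfl | rfl
    · exact absurd rfl hne
    · exact heS
    · exact heS.symm
    · exact absurd rfl hne

lemma dist_le_one_of_mem_mem {e : Sym2 V} (heS : e ∈ T.edgeSet) {u v : V}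
    (hu : u ∈ e) (hv : v ∈ e) : T.dist u v ≤ 1 := by
  rcases eq_or_ne u v with rfl | hne
  · simp [SimpleGraph.dist_self]
  · rw [SimpleGraph.dist_eq_one_iff_adj.mpr (adj_of_mem_mem heS hu hv hne)]

variable [DecidableEq V]

/-- The first edge on the way from `x` to `y`. -/
noncomputable def Efun (hT : T.IsTree) (he : T.edgeSet.Nonempty) (x y : V) : T.edgeSet :=
  if hxy : x = y then ⟨he.choose, he.choose_spec⟩
  else ⟨s(x, nxt hT x y), (T.mem_edgeSet).mpr (adj_nxt hT hxy)⟩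

lemma Efun_val (hT : T.IsTree) (he : T.edgeSet.Nonempty) {x y : V} (hxy : x ≠ y) :
    (Efun hT he x y : Sym2 V) = s(x, nxt hT x y) := by
  rw [Efun, dif_neg hxy]

lemma mem_Efun_left (hT : T.IsTree) (he : T.edgeSet.Nonempty) {x y : V} (hxy : x ≠ y) :
    x ∈ (Efun hT he x y : Sym2 V) := by
  rw [Efun_val hT he hxy, Sym2.mem_iff]; left; rfl

lemma Efun_adj (hT : T.IsTree) (he : T.edgeSet.Nonempty) {x y : V} (h : T.Adj x y) :
    Efun hT he x y = ⟨s(x, y), (T.mem_edgeSet).mpr h⟩ := by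
  have hxy : x ≠ y := h.ne
  have hp : (Walk.cons h .nil).IsPath := by
    rw [Walk.cons_isPath_iff]
    exact ⟨Walk.IsPath.nil, by simp [hxy]⟩
  apply Subtype.ext
  rw [Efun_val hT he hxy, nxt_eq hT _ hp]
  rfl
/-- The map sending a pair of vertices to the pair of first edges. -/
noncomputable def Phi (hT : T.IsTree) (he : T.edgeSet.Nonempty) : Sym2 V → Sym2 T.edgeSet :=
  Sym2.lift ⟨fun x y => s(Efun hT he x y, Efun hT he y x), fun _ _ => Sym2.eq_swap⟩

lemma Phi_mk (hT : T.IsTree) (he : T.edgeSet.Nonempty) (x y : V) :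
    Phi hT he s(x, y) = s(Efun hT he x y, Efun hT he y x) := rfl

/-- From a nontrivial path one gets a walk in the line graph between its first and
last edges, one step shorter. -/
lemma lineWalk : ∀ {x y : V} (p : T.Walk x y), p.IsPath → 1 ≤ p.length →
    ∀ (e f : T.edgeSet), (e : Sym2 V) = s(x, p.getVert 1) →
      (f : Sym2 V) = s(y, p.getVert (p.length - 1)) →
      ∃ w : T.lineGraph.Walk e f, w.length + 1 = p.length := by
  intro x y p
  induction p with
  | nil => intro _ h; simp at h
  | @cons x b y h q ih =>
    intro hp _ e f hef hff
    by_cases hq : q.length = 0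
    · have hby : b = y := Walk.eq_of_length_eq_zero hq
      subst hby
      have h1 : (Walk.cons h q).getVert 1 = b := by
        rw [Walk.getVert_cons_succ, Walk.getVert_zero]
      have h2 : (Walk.cons h q).getVert ((Walk.cons h q).length - 1) = x := by
        rw [Walk.length_cons, hq]
        simp [Walk.getVert_zero]
      have hef' : e = f := by
        apply Subtype.ext
        rw [hef, hff, h1, h2, Sym2.eq_swap]
      subst hef'
      exact ⟨Walk.nil, by simp [Walk.length_cons, hq]⟩
    · have hq1 : 1 ≤ q.length := Nat.one_le_iff_ne_zero.mpr hq
      have hqnil : ¬ q.Nil := by rw [Walk.not_nil_iff_lt_length]; omega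
      have hadjbc : T.Adj b (q.getVert 1) := Walk.adj_snd hqnil
      set e' : T.edgeSet := ⟨s(b, q.getVert 1), (T.mem_edgeSet).mpr hadjbc⟩ with he'
      have hef2 : (e : Sym2 V) = s(x, b) := by
        rw [hef, Walk.getVert_cons_succ, Walk.getVert_zero]
      have hff' : (f : Sym2 V) = s(y, q.getVert (q.length - 1)) := by
        rw [hff, Walk.length_cons, Nat.add_sub_cancel, Walk.getVert_cons q h hq]
      obtain ⟨w', hw'⟩ := ih hp.of_cons hq1 e' f rfl hff'
      have hxq : x ∉ q.support := ((Walk.cons_isPath_iff h q).mp hp).2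
      have hcq : q.getVert 1 ∈ q.support :=
        Walk.mem_support_iff_exists_getVert.mpr ⟨1, rfl, hq1⟩
      have hne : e ≠ e' := by
        intro hcontra
        have : (e : Sym2 V) = (e' : Sym2 V) := congrArg _ hcontra
        rw [hef2, he'] at this
        rw [Sym2.eq_iff] at this
        rcases this with ⟨rfl, -⟩ | ⟨rfl, -⟩
        · exact h.ne rfl
        · exact hxq hcq
      have hadj : T.lineGraph.Adj e e' := by
        rw [lineGraph_adj_iff_exists]
        refine ⟨hne, b, ?_, ?_⟩
        · rw [hef2, Sym2.mem_iff]; right; rfl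
        · rw [he']; rw [Sym2.mem_iff]; left; rfl
      exact ⟨Walk.cons hadj w', by rw [Walk.length_cons, Walk.length_cons, hw']⟩

lemma lineReach (hT : T.IsTree) (he : T.edgeSet.Nonempty) {x y : V} (hxy : x ≠ y) :
    ∃ w : T.lineGraph.Walk (Efun hT he x y) (Efun hT he y x),
      w.length + 1 = T.dist x y := by
  have hd : 1 ≤ T.dist x y := hT.isConnected.pos_dist_of_ne hxy
  have hl : (geod hT x y).length = T.dist x y := geod_length hT x y
  rw [← hl]
  apply lineWalk (geod hT x y) (geod_isPath hT x y) (by omega)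
  · rw [Efun_val hT he hxy]; rfl
  · rw [Efun_val hT he (Ne.symm hxy)]
    have hnn : nxt hT y x = (geod hT x y).getVert ((geod hT x y).length - 1) := by
      rw [nxt, ← geod_reverse hT x y, Walk.getVert_reverse]
    rw [hnn]

lemma lineWalk_lower (hc : T.Connected) :
    ∀ {e f : T.edgeSet} (w : T.lineGraph.Walk e f), 1 ≤ w.length →
      ∃ u v : V, u ∈ (e : Sym2 V) ∧ v ∈ (f : Sym2 V) ∧ T.dist u v + 1 ≤ w.length := by
  intro e f w
  induction w with
  | nil => intro h; simp at h
  | @cons e e' f h w' ih =>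
    intro _
    rw [lineGraph_adj_iff_exists] at h
    obtain ⟨hne, cv, hc1, hc2⟩ := h
    by_cases hl : w'.length = 0
    · have : e' = f := Walk.eq_of_length_eq_zero hl
      subst this
      exact ⟨cv, cv, hc1, hc2, by simp [SimpleGraph.dist_self, Walk.length_cons, hl]⟩
    · obtain ⟨u', v, hu', hv, hd⟩ := ih (by omega)
      refine ⟨cv, v, hc1, hv, ?_⟩
      have h1 : T.dist cv v ≤ T.dist cv u' + T.dist u' v := hc.dist_triangle
      have h2 : T.dist cv u' ≤ 1 := dist_le_one_of_mem_mem e'.prop hc2 hu'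
      rw [Walk.length_cons]
      omega

lemma Efun_ne (hT : T.IsTree) (he : T.edgeSet.Nonempty) {x y : V}
    (h2 : 2 ≤ T.dist x y) : Efun hT he x y ≠ Efun hT he y x := by
  have hxy : x ≠ y := by
    rintro rfl; rw [SimpleGraph.dist_self] at h2; omega
  intro hcontra
  have : (Efun hT he x y : Sym2 V) = (Efun hT he y x : Sym2 V) := congrArg _ hcontra
  rw [Efun_val hT he hxy, Efun_val hT he (Ne.symm hxy), Sym2.eq_iff] at this
  rcases this with ⟨h1, -⟩ | ⟨h1, -⟩
  · exact hxy h1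
  · have hyx : T.Adj y x := by rw [h1]; exact adj_nxt hT (Ne.symm hxy)
    have := SimpleGraph.dist_eq_one_iff_adj.mpr hyx
    rw [SimpleGraph.dist_comm] at this
    omega

lemma lineDist_Efun (hT : T.IsTree) (he : T.edgeSet.Nonempty) {x y : V} (hxy : x ≠ y) :
    T.lineGraph.dist (Efun hT he x y) (Efun hT he y x) + 1 = T.dist x y := by
  obtain ⟨w, hw⟩ := lineReach hT he hxy
  have hd1 : 1 ≤ T.dist x y := hT.isConnected.pos_dist_of_ne hxy
  rcases eq_or_lt_of_le hd1 with hd2 | hd2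
  · -- dist = 1 : the two edges are equal
    have hw0 : w.length = 0 := by omega
    have : Efun hT he x y = Efun hT he y x := Walk.eq_of_length_eq_zero hw0
    rw [this, SimpleGraph.dist_self]
    omega
  · have hupper : T.lineGraph.dist (Efun hT he x y) (Efun hT he y x) ≤ T.dist x y - 1 := by
      have := SimpleGraph.dist_le w
      omega
    have hne : Efun hT he x y ≠ Efun hT he y x := Efun_ne hT he (by omega)
    have hr : T.lineGraph.Reachable (Efun hT he x y) (Efun hT he y x) := ⟨w⟩
    obtain ⟨pw, hpw, hpwl⟩ := hr.exists_path_of_dist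
    have hm1 : 1 ≤ pw.length := by
      rcases Nat.eq_zero_or_pos pw.length with h0 | h0
      · exact absurd (Walk.eq_of_length_eq_zero h0) hne
      · omega
    obtain ⟨u, v, hu, hv, hlow⟩ := lineWalk_lower hT.isConnected pw hm1
    have h1 : T.dist x y ≤ T.dist x u + T.dist u v + T.dist v y := by
      have a1 : T.dist x y ≤ T.dist x u + T.dist u y := hT.isConnected.dist_triangle
      have a2 : T.dist u y ≤ T.dist u v + T.dist v y := hT.isConnected.dist_triangle
      omega
    have h2 : T.dist x u ≤ 1 :=
      dist_le_one_of_mem_mem (Efun hT he x y).prop (mem_Efun_left hT he hxy) hu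
    have h3 : T.dist v y ≤ 1 := by
      rw [SimpleGraph.dist_comm]
      exact dist_le_one_of_mem_mem (Efun hT he y x).prop (mem_Efun_left hT he (Ne.symm hxy)) hv
    omega
set_option maxHeartbeats 1000000 in
/-- Main structural lemma: for distinct edges `e, f` of a tree there are endpoints
`x ∈ e`, `y ∈ f` that are "far": the path from `x` to `y` starts with `e` and ends with
`f`, and `(x, y)` is the unique such pair at its distance. -/
lemma main_struct [Fintype V] (hT : T.IsTree) (he : T.edgeSet.Nonempty)
    {e f : T.edgeSet} (hef : e ≠ f) :
    ∃ x y : V, x ∈ (e : Sym2 V) ∧ y ∈ (f : Sym2 V) ∧ x ≠ y ∧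
      Efun hT he x y = e ∧ Efun hT he y x = f ∧
      (∀ u v : V, u ∈ (e : Sym2 V) → v ∈ (f : Sym2 V) →
        T.dist u v = T.dist x y → u = x ∧ v = y) := by
  classical
  have hconn := hT.isConnected
  obtain ⟨⟨a, c⟩, hmem, hmin⟩ := Finset.exists_min_image
    (Finset.univ.filter fun p : V × V => p.1 ∈ (e : Sym2 V) ∧ p.2 ∈ (f : Sym2 V))
    (fun p => T.dist p.1 p.2)
    ⟨((e : Sym2 V).out.1, (f : Sym2 V).out.1), by
      simp only [Finset.mem_filter, Finset.mem_univ, true_and]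
      exact ⟨Sym2.out_fst_mem _, Sym2.out_fst_mem _⟩⟩
  simp only [Finset.mem_filter, Finset.mem_univ, true_and] at hmem
  obtain ⟨ha, hc⟩ := hmem
  have hmin' : ∀ u v : V, u ∈ (e : Sym2 V) → v ∈ (f : Sym2 V) →
      T.dist a c ≤ T.dist u v := by
    intro u v hu hv
    exact hmin (u, v) (by
      simp only [Finset.mem_filter, Finset.mem_univ, true_and]
      exact ⟨hu, hv⟩)
  set t := T.dist a c with ht
  set b := Sym2.Mem.other ha with hb
  set d := Sym2.Mem.other hc with hd
  have hbe : b ∈ (e : Sym2 V) := Sym2.other_mem ha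
  have hdf : d ∈ (f : Sym2 V) := Sym2.other_mem hc
  have he_ab : s(a, b) = (e : Sym2 V) := Sym2.other_spec ha
  have hf_cd : s(c, d) = (f : Sym2 V) := Sym2.other_spec hc
  have hadj_ab : T.Adj a b := (T.mem_edgeSet).mp (he_ab ▸ e.prop)
  have hadj_cd : T.Adj c d := (T.mem_edgeSet).mp (hf_cd ▸ f.prop)
  set P := geod hT a c with hP
  have hPp : P.IsPath := geod_isPath hT a c
  have hPl : P.length = t := geod_length hT a c
  have hbP : b ∉ P.support := by
    intro hmem
    have hsplit := congrArg Walk.length (P.take_spec hmem)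
    rw [Walk.length_append] at hsplit
    have h1 : (P.takeUntil b hmem).length = T.dist a b := path_length hT _ (hPp.takeUntil hmem)
    have h2 : (P.dropUntil b hmem).length = T.dist b c := path_length hT _ (hPp.dropUntil hmem)
    have h3 : T.dist a b = 1 := SimpleGraph.dist_eq_one_iff_adj.mpr hadj_ab
    have h4 : t ≤ T.dist b c := hmin' b c hbe hc
    omega
  have hdP : d ∉ P.support := by
    intro hmem
    have hsplit := congrArg Walk.length (P.take_spec hmem)
    rw [Walk.length_append] at hsplit
    have h1 : (P.takeUntil d hmem).length = T.dist a d := path_length hT _ (hPp.takeUntil hmem)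
    have h2 : (P.dropUntil d hmem).length = T.dist d c := path_length hT _ (hPp.dropUntil hmem)
    have h3 : T.dist d c = 1 := by
      rw [SimpleGraph.dist_comm]; exact SimpleGraph.dist_eq_one_iff_adj.mpr hadj_cd
    have h4 : t ≤ T.dist a d := hmin' a d ha hdf
    omega
  have hbd : b ≠ d := by
    intro hcontra
    have h0 : t ≤ T.dist b d := hmin' b d hbe hdf
    rw [hcontra, SimpleGraph.dist_self] at h0
    have hac : a = c := hconn.dist_eq_zero_iff.mp (by omega)
    apply hef
    apply Subtype.ext
    rw [← he_ab, ← hf_cd, hac, hcontra]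
  set W : T.Walk b d := Walk.cons hadj_ab.symm (P.concat hadj_cd) with hW
  have hWp : W.IsPath := by
    have hcp : (P.concat hadj_cd).IsPath := by
      rw [← Walk.isPath_reverse_iff, Walk.reverse_concat]
      rw [Walk.cons_isPath_iff]
      refine ⟨hPp.reverse, ?_⟩
      rw [Walk.support_reverse, List.mem_reverse]
      exact hdP
    rw [hW, Walk.cons_isPath_iff]
    refine ⟨hcp, ?_⟩
    rw [Walk.support_concat, List.mem_append]
    rintro (h1 | h2)
    · exact hbP h1
    · simp only [List.mem_singleton] at h2
      exact hbd h2
  have hWl : W.length = t + 2 := by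
    rw [hW, Walk.length_cons, Walk.length_concat, hPl]
  have hdist_bd : T.dist b d = t + 2 := by
    rw [← path_length hT W hWp, hWl]
  have hW1 : W.getVert 1 = a := by
    rw [hW, Walk.getVert_cons_succ, Walk.getVert_zero]
  have hWpen : W.getVert (W.length - 1) = c := by
    rw [hWl, hW]
    show (Walk.cons hadj_ab.symm (P.concat hadj_cd)).getVert (t + 1) = c
    rw [Walk.getVert_cons_succ, Walk.concat_eq_append, Walk.getVert_append]
    rw [hPl]
    simp [Walk.getVert_zero]
  have hE1 : Efun hT he b d = e := by
    apply Subtype.ext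
    rw [Efun_val hT he hbd, nxt_eq hT W hWp, hW1, Sym2.eq_swap, he_ab]
  have hE2 : Efun hT he d b = f := by
    apply Subtype.ext
    rw [Efun_val hT he (Ne.symm hbd), nxt_eq hT W.reverse hWp.reverse,
      Walk.getVert_reverse, hWpen, Sym2.eq_swap, hf_cd]
  refine ⟨b, d, hbe, hdf, hbd, hE1, hE2, ?_⟩
  intro u v hu hv huv
  rw [hdist_bd] at huv
  rw [← he_ab, Sym2.mem_iff] at hu
  rw [← hf_cd, Sym2.mem_iff] at hv
  have hca : ∀ w : V, w ∈ (f : Sym2 V) → T.dist a w ≤ t + 1 := by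
    intro w hw
    have h1 : T.dist a w ≤ T.dist a c + T.dist c w := hconn.dist_triangle
    have h2 : T.dist c w ≤ 1 := dist_le_one_of_mem_mem f.prop hc hw
    omega
  have hcb : ∀ w : V, w ∈ (e : Sym2 V) → T.dist w c ≤ t + 1 := by
    intro w hw
    have h1 : T.dist w c ≤ T.dist w a + T.dist a c := hconn.dist_triangle
    have h2 : T.dist w a ≤ 1 := dist_le_one_of_mem_mem e.prop hw ha
    omega
  rcases hu with rfl | rfl
  · exfalso
    have := hca v (by rw [← hf_cd, Sym2.mem_iff]; exact hv)
    omega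
  · rcases hv with rfl | rfl
    · exfalso
      have := hcb b hbe
      omega
    · exact ⟨rfl, rfl⟩
lemma sdist_mk (G : SimpleGraph V) (x y : V) : sdist G s(x, y) = G.dist x y := by
  rw [sdist, Sym2.lift_mk]

end TreeHosoya

open TreeHosoya in
/-- In a finite tree with at least one edge, for every `k ≥ 1` the
number of unordered pairs of vertices at distance `k` equals the number of
unordered pairs of edges at line-graph distance `k - 1`. -/
theorem stmt1 {V : Type*} [Fintype V] [DecidableEq V] (T : SimpleGraph V)
    [DecidableRel T.Adj] (hT : T.IsTree) (he : T.edgeSet.Nonempty)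
    (k : ℕ) (hk : 1 ≤ k) :
    (univ.filter (fun p : Sym2 V => sdist T p = k)).card =
    (univ.filter (fun q : Sym2 T.edgeSet => sdist T.lineGraph q = k - 1)).card := by
  classical
  apply Finset.card_bij (fun p _ => Phi hT he p)
  · -- maps into the target filter
    intro p hp
    rw [Finset.mem_filter] at hp
    replace hp := hp.2
    rw [Finset.mem_filter]
    refine ⟨Finset.mem_univ _, ?_⟩
    revert hp
    induction p using Sym2.ind with
    | _ x y =>
      intro hp
      rw [sdist_mk] at hp
      have hxy : x ≠ y := by rintro rfl; rw [SimpleGraph.dist_self] at hp; omega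
      rw [Phi_mk, sdist_mk]
      have := lineDist_Efun hT he hxy
      omega
  · -- injectivity
    intro p hp p' hp' heq
    rw [Finset.mem_filter] at hp hp'
    replace hp := hp.2
    replace hp' := hp'.2
    revert hp hp' heq
    induction p using Sym2.ind with
    | _ x y =>
    induction p' using Sym2.ind with
    | _ x' y' =>
    intro heq hp hp'
    rw [sdist_mk] at hp hp'
    rw [Phi_mk, Phi_mk] at heq
    have hxy : x ≠ y := by rintro rfl; rw [SimpleGraph.dist_self] at hp; omega
    have hxy' : x' ≠ y' := by rintro rfl; rw [SimpleGraph.dist_self] at hp'; omega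
    rcases eq_or_lt_of_le hk with hk1 | hk2
    · -- k = 1 : both edges of each pair coincide
      have hadj : T.Adj x y := SimpleGraph.dist_eq_one_iff_adj.mp (by omega)
      have hadj' : T.Adj x' y' := SimpleGraph.dist_eq_one_iff_adj.mp (by omega)
      rw [Efun_adj hT he hadj, Efun_adj hT he hadj.symm,
        Efun_adj hT he hadj', Efun_adj hT he hadj'.symm, Sym2.eq_iff] at heq
      rcases heq with ⟨h1, -⟩ | ⟨h1, -⟩
      · exact congrArg Subtype.val h1
      · exact (congrArg Subtype.val h1).trans Sym2.eq_swap
    · -- k ≥ 2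
      set e := Efun hT he x y with hee
      set f := Efun hT he y x with hff
      have hne : e ≠ f := Efun_ne hT he (by omega)
      have hkd : T.lineGraph.dist e f + 1 = k := by
        have h := lineDist_Efun hT he hxy
        rw [← hee, ← hff] at h
        omega
      obtain ⟨x0, y0, hx0, hy0, hxy0, hE1, hE2, huniq⟩ := main_struct hT he hne
      have hk0 : T.dist x0 y0 = k := by
        have := lineDist_Efun hT he hxy0
        rw [hE1, hE2] at this
        omega
      have hx : x = x0 ∧ y = y0 :=
        huniq x y (mem_Efun_left hT he hxy) (mem_Efun_left hT he (Ne.symm hxy))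
          (by omega)
      rw [Sym2.eq_iff] at heq
      rcases heq with ⟨h1, h2⟩ | ⟨h1, h2⟩
      · have hx' : x' = x0 ∧ y' = y0 := by
          refine huniq x' y' ?_ ?_ (by omega)
          · rw [h1]; exact mem_Efun_left hT he hxy'
          · rw [h2]; exact mem_Efun_left hT he (Ne.symm hxy')
        rw [hx.1, hx.2, hx'.1, hx'.2]
      · -- crossed case
        obtain ⟨x1, y1, hx1, hy1, hxy1, hE1', hE2', huniq'⟩ := main_struct hT he (Ne.symm hne)
        have hk1 : T.dist x1 y1 = k := by
          have := lineDist_Efun hT he hxy1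
          rw [hE1', hE2'] at this
          rw [SimpleGraph.dist_comm] at this
          omega
        have hyx : y = x1 ∧ x = y1 := by
          refine huniq' y x (mem_Efun_left hT he (Ne.symm hxy)) (mem_Efun_left hT he hxy) ?_
          rw [SimpleGraph.dist_comm]
          omega
        have hx' : x' = x1 ∧ y' = y1 := by
          refine huniq' x' y' ?_ ?_ (by omega)
          · rw [h2]; exact mem_Efun_left hT he hxy'
          · rw [h1]; exact mem_Efun_left hT he (Ne.symm hxy')
        rw [hx'.1, hx'.2, ← hyx.1, ← hyx.2, Sym2.eq_swap]
  · -- surjectivity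
    intro q hq
    rw [Finset.mem_filter] at hq
    replace hq := hq.2
    revert hq
    induction q using Sym2.ind with
    | _ e f =>
    intro hq
    rw [sdist_mk] at hq
    by_cases hef : e = f
    · subst hef
      rw [SimpleGraph.dist_self] at hq
      have hk1 : k = 1 := by omega
      have ha : (e : Sym2 V).out.1 ∈ (e : Sym2 V) := Sym2.out_fst_mem _
      set a := (e : Sym2 V).out.1 with hadef
      set b := Sym2.Mem.other ha with hbdef
      have hspec : s(a, b) = (e : Sym2 V) := Sym2.other_spec ha
      have hadj : T.Adj a b := (T.mem_edgeSet).mp (hspec ▸ e.prop)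
      refine ⟨s(a, b), ?_, ?_⟩
      · rw [Finset.mem_filter]
        refine ⟨Finset.mem_univ _, ?_⟩
        rw [sdist_mk, hk1]
        exact SimpleGraph.dist_eq_one_iff_adj.mpr hadj
      · rw [Phi_mk, Efun_adj hT he hadj, Efun_adj hT he hadj.symm]
        have h1 : (⟨s(a, b), (T.mem_edgeSet).mpr hadj⟩ : T.edgeSet) = e := Subtype.ext hspec
        have h2 : (⟨s(b, a), (T.mem_edgeSet).mpr hadj.symm⟩ : T.edgeSet) = e :=
          Subtype.ext (Sym2.eq_swap.trans hspec)
        rw [h1, h2]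
    · obtain ⟨x, y, hx, hy, hxy, hE1, hE2, -⟩ := main_struct hT he (by exact hef)
      have hd := lineDist_Efun hT he hxy
      rw [hE1, hE2] at hd
      refine ⟨s(x, y), ?_, ?_⟩
      · rw [Finset.mem_filter]
        refine ⟨Finset.mem_univ _, ?_⟩
        rw [sdist_mk]
        omega
      · rw [Phi_mk, hE1, hE2]
end

section
/- Let T be a finite tree with n vertices. Then the Hosoya polynomial and the edge-Hosoya polynomial of T satisfy H(T,x) = x·H_e(T,x) + n as polynomials in x. -/
open SimpleGraph Polynomial Finset

section AuxTree

variable {V : Type*} [DecidableEq V] {T : SimpleGraph V}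

lemma exists_step (hc : T.Connected) {u v : V} (h : u ≠ v) :
    ∃ w, T.Adj u w ∧ T.dist w v + 1 = T.dist u v := by
  have hd : T.dist u v ≠ 0 := (hc.pos_dist_of_ne h).ne'
  obtain ⟨p, hp⟩ := exists_walk_of_dist_ne_zero hd
  cases p with
  | nil => exact absurd rfl h
  | cons hadj q =>
    rename_i w
    refine ⟨w, hadj, ?_⟩
    have h1 : T.dist w v ≤ q.length := dist_le q
    have h2 : T.dist u v ≤ 1 + T.dist w v := by
      calc T.dist u v ≤ T.dist u w + T.dist w v := hc.dist_triangle
        _ ≤ 1 + T.dist w v := by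
            have : T.dist u w = 1 := dist_eq_one_iff_adj.mpr hadj
            omega
    have h3 : T.dist u v = q.length + 1 := by simpa using hp.symm
    omega

lemma step_unique (hT : T.IsTree) {u v w w' : V}
    (hw : T.Adj u w) (hdw : T.dist w v + 1 = T.dist u v)
    (hw' : T.Adj u w') (hdw' : T.dist w' v + 1 = T.dist u v) : w = w' := by
  have hc := hT.isConnected
  -- build shortest paths from w and w' to v, prepend u
  have key : ∀ (x : V), T.Adj u x → T.dist x v + 1 = T.dist u v →
      ∃ p : T.Walk u v, p.IsPath ∧ p.support.tail.head? = some x := by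
    intro x hx hdx
    obtain ⟨q, hq⟩ := (hc.preconnected x v).exists_walk_length_eq_dist
    have hqpath : q.IsPath := q.isPath_of_length_eq_dist hq
    have hu : u ∉ q.support := by
      intro hmem
      have : T.dist u v ≤ (q.dropUntil u hmem).length := dist_le _
      have : (q.dropUntil u hmem).length ≤ q.length := Walk.length_dropUntil_le q hmem
      omega
    refine ⟨Walk.cons hx q, (Walk.cons_isPath_iff hx q).mpr ⟨hqpath, hu⟩, ?_⟩
    rw [Walk.support_cons, q.support_eq_cons]
    simp
    rw [q.support_eq_cons]
    rfl
  obtain ⟨p, hp, hps⟩ := key w hw hdw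
  obtain ⟨p', hp', hps'⟩ := key w' hw' hdw'
  have := hT.existsUnique_path u v
  obtain ⟨r, -, hr⟩ := this
  have h1 : p = p' := by rw [hr p hp, hr p' hp']
  rw [h1, hps'] at hps
  exact (Option.some_inj.mp hps).symm

set_option linter.unusedSectionVars false

/-- the next vertex from `u` on the unique path toward `v`. -/
noncomputable def nxt (hc : T.Connected) {u v : V} (h : u ≠ v) : V :=
  (exists_step hc h).choose

lemma nxt_adj (hc : T.Connected) {u v : V} (h : u ≠ v) : T.Adj u (nxt hc h) :=
  (exists_step hc h).choose_spec.1

lemma nxt_dist (hc : T.Connected) {u v : V} (h : u ≠ v) :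
    T.dist (nxt hc h) v + 1 = T.dist u v :=
  (exists_step hc h).choose_spec.2

lemma eq_nxt (hT : T.IsTree) {u v w : V} (h : u ≠ v)
    (hw : T.Adj u w) (hdw : T.dist w v + 1 = T.dist u v) : w = nxt hT.isConnected h :=
  step_unique hT hw hdw (nxt_adj _ h) (nxt_dist _ h)

lemma nxt_of_adj (hT : T.IsTree) {u v : V} (h : T.Adj u v) :
    nxt hT.isConnected h.ne = v := by
  refine (eq_nxt hT h.ne h ?_).symm
  rw [dist_self, dist_eq_one_iff_adj.mpr h]

/-- first step toward `v` is the first step toward any vertex `w` on the path. -/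
lemma nxt_nxt (hT : T.IsTree) {u v : V} (h : u ≠ v) (h2 : 2 ≤ T.dist u v)
    (hwv : nxt hT.isConnected h ≠ v) :
    nxt hT.isConnected h.symm = nxt hT.isConnected (Ne.symm hwv) := by
  -- z' := nxt v w satisfies the spec of nxt v u
  set w := nxt hT.isConnected h with hw
  have hc := hT.isConnected
  have hadj : T.Adj u w := nxt_adj hc h
  have hd1 : T.dist w v + 1 = T.dist u v := nxt_dist hc h
  set z' := nxt hc (Ne.symm hwv) with hz'
  have hz'adj : T.Adj v z' := nxt_adj hc (Ne.symm hwv)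
  have hz'd : T.dist z' w + 1 = T.dist v w := nxt_dist hc (Ne.symm hwv)
  have hvw : T.dist v w = T.dist w v := dist_comm ..
  have huw : T.dist u w = 1 := dist_eq_one_iff_adj.mpr hadj
  have hvz' : T.dist v z' = 1 := dist_eq_one_iff_adj.mpr hz'adj
  have h3 : T.dist z' u ≤ T.dist z' w + T.dist w u := hc.dist_triangle
  have h4 : T.dist v u ≤ T.dist v z' + T.dist z' u := hc.dist_triangle
  have hwu : T.dist w u = T.dist u w := dist_comm ..
  have hvu : T.dist v u = T.dist u v := dist_comm ..
  have hspec : T.dist z' u + 1 = T.dist v u := by omega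
  exact (eq_nxt hT h.symm hz'adj hspec).symm

/-- The first edge on the path from `u` to `v`. -/
noncomputable def fe (hT : T.IsTree) {u v : V} (h : u ≠ v) : T.edgeSet :=
  ⟨s(u, nxt hT.isConnected h), (nxt_adj hT.isConnected h)⟩

lemma fe_of_adj (hT : T.IsTree) {u v : V} (h : T.Adj u v) :
    fe hT h.ne = ⟨s(u, v), h⟩ := by
  simp [fe, nxt_of_adj hT h]

lemma fe_symm_of_dist_one (hT : T.IsTree) {u v : V} (h : u ≠ v) (hd : T.dist u v = 1) :
    fe hT h = fe hT h.symm := by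
  have hadj : T.Adj u v := dist_eq_one_iff_adj.mp hd
  rw [fe_of_adj hT hadj, fe_of_adj hT hadj.symm]
  exact Subtype.ext (Sym2.eq_swap)

lemma keyWalk (hT : T.IsTree) : ∀ (d : ℕ) (u v : V) (h : u ≠ v), T.dist u v ≤ d →
    ∃ W : T.lineGraph.Walk (fe hT h) (fe hT h.symm), W.length + 1 ≤ T.dist u v := by
  intro d
  induction d with
  | zero => intro u v h hle; exact absurd hle (by have := hT.isConnected.pos_dist_of_ne h; omega)
  | succ d ih =>
    intro u v h hle
    have hc := hT.isConnected
    have hpos := hc.pos_dist_of_ne h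
    rcases eq_or_lt_of_le (Nat.succ_le_of_lt hpos) with h1 | h2
    · -- dist = 1
      exact ⟨Walk.nil.copy rfl (fe_symm_of_dist_one hT h h1.symm), by simp; omega⟩
    · -- dist ≥ 2
      set w := nxt hc h with hwdef
      have hd1 : T.dist w v + 1 = T.dist u v := nxt_dist hc h
      have hwv : w ≠ v := by
        intro hh; rw [hh] at hd1; rw [dist_self] at hd1; omega
      obtain ⟨W', hW'⟩ := ih w v hwv (by omega)
      have hn := nxt_nxt hT h (by omega) hwv
      have hEvu : fe hT (Ne.symm hwv) = fe hT h.symm := by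
        refine Subtype.ext ?_
        show s(v, nxt hc (Ne.symm hwv)) = s(v, nxt hc h.symm)
        rw [hn]
      have hW2 : ∃ W2 : T.lineGraph.Walk (fe hT h) (fe hT (Ne.symm hwv)),
          W2.length ≤ W'.length + 1 := by
        by_cases heq : fe hT h = fe hT hwv
        · exact ⟨W'.copy heq.symm rfl, by simp⟩
        · refine ⟨Walk.cons ?_ W', le_of_eq (Walk.length_cons _ _)⟩
          refine lineGraph_adj_iff_exists.mpr ⟨heq, w, ?_, ?_⟩
          · simp [fe]
            exact Or.inr rfl
          · simp [fe]
      obtain ⟨W2, hW2len⟩ := hW2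
      exact ⟨W2.copy rfl hEvu, by simp only [Walk.length_copy]; omega⟩

lemma dist_le_one_of_mem_edge (hc : T.Connected) {e : Sym2 V} (he : e ∈ T.edgeSet)
    {u v : V} (hu : u ∈ e) (hv : v ∈ e) : T.dist u v ≤ 1 := by
  induction e with
  | _ a b =>
    have hadj : T.Adj a b := he
    rw [Sym2.mem_iff] at hu hv
    rcases hu with rfl | rfl <;> rcases hv with rfl | rfl
    · simp [dist_self]
    · exact le_of_eq (dist_eq_one_iff_adj.mpr hadj)
    · exact le_of_eq (dist_eq_one_iff_adj.mpr hadj.symm)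
    · simp [dist_self]

lemma lowerBound (hc : T.Connected) :
    ∀ {e f : T.edgeSet} (W : T.lineGraph.Walk e f) (u v : V),
      u ∈ (e : Sym2 V) → v ∈ (f : Sym2 V) → T.dist u v ≤ W.length + 1 := by
  intro e f W
  induction W with
  | nil =>
    intro u v hu hv
    simpa using dist_le_one_of_mem_edge hc (Subtype.coe_prop _) hu hv
  | cons hadj W' ih =>
    rename_i e e' f' _
    intro u v hu hv
    obtain ⟨-, x, hx1, hx2⟩ := lineGraph_adj_iff_exists.mp hadj
    have h1 : T.dist u x ≤ 1 := dist_le_one_of_mem_edge hc (Subtype.coe_prop _) hu hx1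
    have h2 : T.dist x v ≤ W'.length + 1 := ih x v hx2 hv
    have h3 : T.dist u v ≤ T.dist u x + T.dist x v := hc.dist_triangle
    simp only [Walk.length_cons]
    omega

lemma key_dist (hT : T.IsTree) {u v : V} (h : u ≠ v) :
    T.dist u v = T.lineGraph.dist (fe hT h) (fe hT h.symm) + 1 := by
  have hc := hT.isConnected
  obtain ⟨W, hW⟩ := keyWalk hT (T.dist u v) u v h le_rfl
  have hreach : T.lineGraph.Reachable (fe hT h) (fe hT h.symm) := ⟨W⟩
  obtain ⟨W0, hW0⟩ := hreach.exists_walk_length_eq_dist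
  have hup : T.lineGraph.dist (fe hT h) (fe hT h.symm) ≤ W.length := dist_le W
  have hlow : T.dist u v ≤ W0.length + 1 := by
    refine lowerBound hc W0 u v ?_ ?_
    · show u ∈ s(u, nxt hc h); simp
    · show v ∈ s(v, nxt hc h.symm); simp
  omega

lemma coreInj (hT : T.IsTree) {u v u' v' : V} (h : u ≠ v) (h' : u' ≠ v')
    (he : fe hT h = fe hT h') (hf : fe hT h.symm = fe hT h'.symm) :
    s(u, v) = s(u', v') := by
  have hc := hT.isConnected
  have hdd : T.dist u v = T.dist u' v' := by
    rw [key_dist hT h, key_dist hT h', he, hf]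
  rcases eq_or_lt_of_le (Nat.succ_le_of_lt (hc.pos_dist_of_ne h)) with h1 | h2
  · -- dist u v = 1
    have hadj : T.Adj u v := dist_eq_one_iff_adj.mp h1.symm
    have hadj' : T.Adj u' v' := dist_eq_one_iff_adj.mp (hdd ▸ h1.symm)
    have := congrArg Subtype.val he
    rwa [fe_of_adj hT hadj, fe_of_adj hT hadj'] at this
  · -- dist u v ≥ 2
    have hd2 : 2 ≤ T.dist u v := h2
    have hd2' : 2 ≤ T.dist u' v' := hdd ▸ hd2
    have hwd : T.dist (nxt hc h) v + 1 = T.dist u v := nxt_dist hc h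
    have hzd : T.dist (nxt hc h.symm) u + 1 = T.dist v u := nxt_dist hc h.symm
    have hwd' : T.dist (nxt hc h') v' + 1 = T.dist u' v' := nxt_dist hc h'
    have hzd' : T.dist (nxt hc h'.symm) u' + 1 = T.dist v' u' := nxt_dist hc h'.symm
    have hwv : nxt hc h ≠ v := by
      intro hh; rw [hh, dist_self] at hwd; omega
    have hzw : T.dist (nxt hc h.symm) (nxt hc h) + 1 = T.dist v (nxt hc h) := by
      have hn := nxt_nxt hT h hd2 hwv
      rw [hn]; exact nxt_dist hc (Ne.symm hwv)
    have hvw : T.dist v (nxt hc h) = T.dist (nxt hc h) v := dist_comm ..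
    have hvu : T.dist v u = T.dist u v := dist_comm ..
    have hvu' : T.dist v' u' = T.dist u' v' := dist_comm ..
    have he' : s(u, nxt hc h) = s(u', nxt hc h') := congrArg Subtype.val he
    have hf' : s(v, nxt hc h.symm) = s(v', nxt hc h'.symm) := congrArg Subtype.val hf
    rw [Sym2.eq_iff] at he' hf'
    rcases he' with ⟨hA1, hA2⟩ | ⟨hB1, hB2⟩
    · rcases hf' with ⟨hC1, hC2⟩ | ⟨hD1, hD2⟩
      · rw [hA1, hC1]
      · -- v' = nxt u v.symm i.e. v' = z ; u' = u
        exfalso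
        rw [← hA1, ← hD2] at hdd
        have : T.dist u (nxt hc h.symm) = T.dist (nxt hc h.symm) u := dist_comm ..
        omega
    · -- u = w', w = u'
      exfalso
      rcases hf' with ⟨hC1, hC2⟩ | ⟨hD1, hD2⟩
      · -- v = v'
        rw [← hB2, ← hC1] at hdd
        have : T.dist (nxt hc h) v = T.dist (nxt hc h) v := rfl
        omega
      · -- v' = z, z' = v? hD1 : v = nxt hc h'.symm, hD2 : nxt hc h.symm = v'
        rw [← hB2, ← hD2] at hdd
        have : T.dist (nxt hc h) (nxt hc h.symm) = T.dist (nxt hc h.symm) (nxt hc h) :=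
          dist_comm ..
        omega

/-- The pair of first edges toward each other, as a total map on `Sym2 V`. -/
noncomputable def phi (hT : T.IsTree) (e₀ : T.edgeSet) : Sym2 V → Sym2 T.edgeSet :=
  Sym2.lift ⟨fun u v => if h : u = v then s(e₀, e₀) else s(fe hT h, fe hT (Ne.symm h)),
    by
      intro u v
      rcases eq_or_ne u v with rfl | hne
      · rfl
      · show (if h : u = v then s(e₀, e₀) else s(fe hT h, fe hT (Ne.symm h)))
            = (if h : v = u then s(e₀, e₀) else s(fe hT h, fe hT (Ne.symm h)))
        rw [dif_neg hne, dif_neg hne.symm]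
        exact Sym2.eq_swap⟩

lemma phi_mk (hT : T.IsTree) (e₀ : T.edgeSet) {u v : V} (hne : u ≠ v) :
    phi hT e₀ s(u, v) = s(fe hT hne, fe hT hne.symm) := by
  simp [phi, dif_neg hne]

lemma phi_inj' (hT : T.IsTree) (e₀ : T.edgeSet) {u v u' v' : V}
    (hne : u ≠ v) (hne' : u' ≠ v')
    (heq : phi hT e₀ s(u, v) = phi hT e₀ s(u', v')) : s(u, v) = s(u', v') := by
  rw [phi_mk hT e₀ hne, phi_mk hT e₀ hne'] at heq
  rw [Sym2.eq_iff] at heq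
  rcases heq with ⟨he, hf⟩ | ⟨he, hf⟩
  · exact coreInj hT hne hne' he hf
  · exact (coreInj hT hne hne'.symm he hf).trans Sym2.eq_swap

theorem stmt2' {V : Type*} [Fintype V] [DecidableEq V] (T : SimpleGraph V)
    [DecidableRel T.Adj] (hT : T.IsTree) :
    (∑ p : Sym2 V, (X : Polynomial ℝ) ^ (Sym2.lift ⟨T.dist, fun _ _ => SimpleGraph.dist_comm⟩ p))
      = X * (∑ q : Sym2 T.edgeSet,
          X ^ (Sym2.lift ⟨T.lineGraph.dist, fun _ _ => SimpleGraph.dist_comm⟩ q))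
        + C (Fintype.card V : ℝ) := by
  have hc := hT.isConnected
  rcases isEmpty_or_nonempty ↥T.edgeSet with hemp | hne
  · -- no edges: V is a single vertex
    have hsub : ∀ a b : V, a = b := by
      intro a b; by_contra hab
      obtain ⟨w, hadj, -⟩ := exists_step hc hab
      exact hemp.false ⟨s(a, w), hadj⟩
    have hcard : Fintype.card V = 1 := by
      obtain ⟨a⟩ := hc.nonempty
      exact Fintype.card_eq_one_iff.mpr ⟨a, fun b => hsub b a⟩
    have h1 : ∀ p : Sym2 V,
        (X : Polynomial ℝ) ^ (Sym2.lift ⟨T.dist, fun _ _ => SimpleGraph.dist_comm⟩ p) = 1 := by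
      intro p
      induction p using Sym2.ind with
      | _ a b =>
        rw [hsub a b]
        simp [SimpleGraph.dist_self]
    rw [Finset.sum_congr rfl (fun p _ => h1 p), Finset.sum_const]
    have h2 : Fintype.card (Sym2 V) = 1 := by
      rw [Sym2.card, hcard]
      decide
    rw [Finset.card_univ, h2, Finset.univ_eq_empty (α := Sym2 ↥T.edgeSet), Finset.sum_empty,
      hcard]
    simp
  · obtain ⟨e₀⟩ := hne
    have hcardE : Fintype.card ↥T.edgeSet + 1 = Fintype.card V := by
      rw [← edgeFinset_card]; exact hT.card_edgeFinset
    rw [← Finset.sum_filter_add_sum_filter_not Finset.univ (fun p : Sym2 V => p.IsDiag)]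
    have hdiag : (∑ p ∈ Finset.univ.filter (fun p : Sym2 V => p.IsDiag),
        (X : Polynomial ℝ) ^ (Sym2.lift ⟨T.dist, fun _ _ => SimpleGraph.dist_comm⟩ p))
        = C (Fintype.card V : ℝ) := by
      have h1 : ∀ p ∈ Finset.univ.filter (fun p : Sym2 V => p.IsDiag),
          (X : Polynomial ℝ) ^ (Sym2.lift ⟨T.dist, fun _ _ => SimpleGraph.dist_comm⟩ p) = 1 := by
        intro p hp
        have hd : p.IsDiag := (Finset.mem_filter.mp hp).2
        revert hd
        induction p using Sym2.ind with
        | _ a b =>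
          intro hd
          rw [Sym2.mk_isDiag_iff] at hd
          subst hd
          simp [SimpleGraph.dist_self]
      rw [Finset.sum_congr rfl h1, Finset.sum_const]
      have h2 : (Finset.univ.filter (fun p : Sym2 V => p.IsDiag)).card = Fintype.card V := by
        rw [← Fintype.card_subtype]
        exact Sym2.card_subtype_diag
      rw [h2, nsmul_eq_mul, mul_one, Polynomial.C_eq_natCast]
    have hoff : (∑ p ∈ Finset.univ.filter (fun p : Sym2 V => ¬p.IsDiag),
        (X : Polynomial ℝ) ^ (Sym2.lift ⟨T.dist, fun _ _ => SimpleGraph.dist_comm⟩ p))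
        = X * (∑ q : Sym2 T.edgeSet,
            X ^ (Sym2.lift ⟨T.lineGraph.dist, fun _ _ => SimpleGraph.dist_comm⟩ q)) := by
      set s := Finset.univ.filter (fun p : Sym2 V => ¬p.IsDiag) with hs
      have hstep1 : ∀ p ∈ s,
          (X : Polynomial ℝ) ^ (Sym2.lift ⟨T.dist, fun _ _ => SimpleGraph.dist_comm⟩ p)
          = X ^ ((Sym2.lift ⟨T.lineGraph.dist, fun _ _ => SimpleGraph.dist_comm⟩
              (phi hT e₀ p)) + 1) := by
        intro p hp
        have hd : ¬p.IsDiag := (Finset.mem_filter.mp hp).2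
        revert hd
        induction p using Sym2.ind with
        | _ u v =>
          intro hd
          rw [Sym2.mk_isDiag_iff] at hd
          rw [phi_mk hT e₀ hd]
          simp only [Sym2.lift_mk]
          rw [key_dist hT hd]
      rw [Finset.sum_congr rfl hstep1]
      have hinj : Set.InjOn (phi hT e₀) ↑s := by
        intro p hp q hq hpq
        rw [Finset.mem_coe, hs, Finset.mem_filter] at hp hq
        have hp' : ¬p.IsDiag := hp.2
        have hq' : ¬q.IsDiag := hq.2
        revert hp' hq' hpq
        induction p using Sym2.ind with
        | _ u v =>
          induction q using Sym2.ind with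
          | _ u' v' =>
            intro hpq hp' hq'
            rw [Sym2.mk_isDiag_iff] at hp' hq'
            exact phi_inj' hT e₀ hp' hq' hpq
      rw [← Finset.sum_image
        (f := fun q => (X : Polynomial ℝ) ^
          (Sym2.lift ⟨T.lineGraph.dist, fun _ _ => SimpleGraph.dist_comm⟩ q + 1))
        (fun x hx y hy h => hinj hx hy h)]
      have himg : s.image (phi hT e₀) = Finset.univ := by
        apply Finset.eq_univ_of_card
        rw [Finset.card_image_of_injOn hinj]
        have h3 : s.card = (Fintype.card V).choose 2 := by
          rw [hs, ← Fintype.card_subtype]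
          exact Sym2.card_subtype_not_diag
        rw [h3, Fintype.card_congr (Equiv.refl _), Sym2.card, hcardE]
      rw [himg]
      simp_rw [pow_succ]
      rw [← Finset.sum_mul, mul_comm]
    rw [hdiag, hoff, add_comm]

end AuxTree

/-- For a finite tree `T` on `n` vertices,
`H(T,x) = x · H_e(T,x) + n` as polynomials. -/
theorem stmt2 {V : Type*} [Fintype V] [DecidableEq V] (T : SimpleGraph V)
    [DecidableRel T.Adj] (hT : T.IsTree) :
    hosoyaPoly T = X * edgeHosoyaPoly T + C (Fintype.card V : ℝ) := by
  simp only [hosoyaPoly, edgeHosoyaPoly, sdist]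
  exact stmt2' T hT
end

section
/- Let T be a finite tree with n vertices. Then the edge-Wiener index of T equals the Wiener index minus the number of unordered pairs of vertices: W_e(T) = W(T) − n(n−1)/2. -/
open SimpleGraph Polynomial Finset

namespace Stmt7Aux

set_option linter.unusedSectionVars false
set_option linter.unusedVariables false
set_option maxHeartbeats 1000000

variable {V : Type*} [DecidableEq V] {T : SimpleGraph V}

noncomputable def pth (hT : T.IsTree) (u v : V) : T.Walk u v :=
  (hT.existsUnique_path u v).choose

lemma pth_isPath (hT : T.IsTree) (u v : V) : (pth hT u v).IsPath :=
  (hT.existsUnique_path u v).choose_spec.1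

lemma pth_eq (hT : T.IsTree) {u v : V} (p : T.Walk u v) (hp : p.IsPath) : p = pth hT u v :=
  (hT.existsUnique_path u v).choose_spec.2 p hp

lemma pth_length (hT : T.IsTree) (u v : V) : (pth hT u v).length = T.dist u v := by
  obtain ⟨p, hp, hl⟩ := (hT.isConnected u v).exists_path_of_dist
  rw [← pth_eq hT p hp] at *
  exact hl

lemma pth_reverse (hT : T.IsTree) (u v : V) : pth hT u v = (pth hT v u).reverse :=
  (pth_eq hT _ (pth_isPath hT v u).reverse).symm

lemma dist_le_of_mem_support (hT : T.IsTree) {u v w : V} (p : T.Walk u v)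
    (hw : w ∈ p.support) : T.dist w v ≤ p.length :=
  le_trans (SimpleGraph.dist_le (p.dropUntil w hw)) (SimpleGraph.Walk.length_dropUntil_le p hw)

/-! ### Adjacent vertices have distances to any vertex differing by exactly one -/

lemma adj_dist_ne (hT : T.IsTree) {a b : V} (hab : T.Adj a b) (c : V) :
    T.dist a c ≠ T.dist b c := by
  intro h
  by_cases ha : a ∈ (pth hT b c).support
  · have h1 := SimpleGraph.dist_le ((pth hT b c).dropUntil a ha)
    have h2 : ((pth hT b c).takeUntil a ha).length + ((pth hT b c).dropUntil a ha).length
        = (pth hT b c).length := by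
      rw [← SimpleGraph.Walk.length_append, SimpleGraph.Walk.take_spec]
    have h3 : ((pth hT b c).takeUntil a ha).length ≠ 0 := by
      intro h0
      exact hab.ne (SimpleGraph.Walk.eq_of_length_eq_zero h0).symm
    rw [pth_length] at h2
    omega
  · have hp : (SimpleGraph.Walk.cons hab (pth hT b c)).IsPath :=
      (pth_isPath hT b c).cons ha
    have hl := congrArg SimpleGraph.Walk.length (pth_eq hT _ hp)
    rw [SimpleGraph.Walk.length_cons, pth_length, pth_length] at hl
    omega

lemma adj_dist_cases (hT : T.IsTree) {a b : V} (hab : T.Adj a b) (c : V) :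
    T.dist b c = T.dist a c + 1 ∨ T.dist a c = T.dist b c + 1 := by
  have h1 : T.dist a c ≤ T.dist a b + T.dist b c := hT.isConnected.dist_triangle
  have h2 : T.dist b c ≤ T.dist b a + T.dist a c := hT.isConnected.dist_triangle
  have hab1 : T.dist a b = 1 := SimpleGraph.dist_eq_one_iff_adj.mpr hab
  have hba1 : T.dist b a = 1 := SimpleGraph.dist_eq_one_iff_adj.mpr hab.symm
  have := adj_dist_ne hT hab c
  omega

lemma exists_next (hT : T.IsTree) {u v : V} {k : ℕ} (h : T.dist u v = k + 1) :
    ∃ w, T.Adj u w ∧ T.dist w v = k := by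
  obtain ⟨p, hp⟩ := (hT.isConnected u v).exists_walk_length_eq_dist
  cases p with
  | nil => rw [SimpleGraph.Walk.length_nil] at hp; omega
  | @cons _ w _ hadj q =>
      refine ⟨w, hadj, ?_⟩
      have h1 : T.dist w v ≤ q.length := SimpleGraph.dist_le q
      have h2 : T.dist u v ≤ T.dist u w + T.dist w v := hT.isConnected.dist_triangle
      have h3 : T.dist u w = 1 := SimpleGraph.dist_eq_one_iff_adj.mpr hadj
      rw [SimpleGraph.Walk.length_cons] at hp
      omega

lemma pth_cons (hT : T.IsTree) {a b c : V} (hab : T.Adj a b)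
    (h : T.dist b c + 1 = T.dist a c) :
    pth hT a c = SimpleGraph.Walk.cons hab (pth hT b c) := by
  have ha : a ∉ (pth hT b c).support := by
    intro ha
    have h1 := dist_le_of_mem_support hT (pth hT b c) ha
    rw [pth_length] at h1
    omega
  exact (pth_eq hT _ ((pth_isPath hT b c).cons ha)).symm

lemma desc_unique (hT : T.IsTree) {u v x y : V} (hux : T.Adj u x) (huy : T.Adj u y)
    (hx : T.dist x v < T.dist u v) (hy : T.dist y v < T.dist u v) : x = y := by
  have hx' : T.dist x v + 1 = T.dist u v := by have := adj_dist_cases hT hux v; omega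
  have hy' : T.dist y v + 1 = T.dist u v := by have := adj_dist_cases hT huy v; omega
  have e2 : SimpleGraph.Walk.cons hux (pth hT x v) = SimpleGraph.Walk.cons huy (pth hT y v) :=
    (pth_cons hT hux hx').symm.trans (pth_cons hT huy hy')
  have h3 := congrArg SimpleGraph.Walk.support e2
  rw [SimpleGraph.Walk.support_cons, SimpleGraph.Walk.support_cons,
    SimpleGraph.Walk.support_eq_cons (pth hT x v),
    SimpleGraph.Walk.support_eq_cons (pth hT y v)] at h3
  exact (List.cons.injEq _ _ _ _ ▸ ((List.cons.injEq _ _ _ _).mp h3).2).1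


lemma dist_le_one_of_mem (hT : T.IsTree) {e : Sym2 V} (he : e ∈ T.edgeSet) {u v : V}
    (hu : u ∈ e) (hv : v ∈ e) : T.dist u v ≤ 1 := by
  induction e using Sym2.ind with
  | _ a b =>
    have hadj : T.Adj a b := (T.mem_edgeSet).mp he
    rw [Sym2.mem_iff] at hu hv
    rcases hu with rfl | rfl <;> rcases hv with rfl | rfl
    · simp [SimpleGraph.dist_self]
    · exact le_of_eq (SimpleGraph.dist_eq_one_iff_adj.mpr hadj)
    · exact le_of_eq (SimpleGraph.dist_eq_one_iff_adj.mpr hadj.symm)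
    · simp [SimpleGraph.dist_self]

lemma line_walk_bound (hT : T.IsTree) {e f : T.edgeSet} (w : T.lineGraph.Walk e f) :
    ∀ u v, u ∈ (e : Sym2 V) → v ∈ (f : Sym2 V) → T.dist u v ≤ w.length + 1 := by
  induction w with
  | nil =>
    intro u v hu hv
    simpa using dist_le_one_of_mem hT (Subtype.mem _) hu hv
  | @cons e e' f h w ih =>
    intro u v hu hv
    obtain ⟨hne, x, hx1, hx2⟩ := lineGraph_adj_iff_exists.mp h
    have h1 : T.dist u x ≤ 1 := dist_le_one_of_mem hT (Subtype.mem e) hu hx1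
    have h2 := ih x v hx2 hv
    have h3 : T.dist u v ≤ T.dist u x + T.dist x v := hT.isConnected.dist_triangle
    rw [SimpleGraph.Walk.length_cons]
    omega

lemma line_upper (hT : T.IsTree) : ∀ (k : ℕ) (a b c d : V) (hab : T.Adj a b) (hcd : T.Adj c d),
    T.dist a c = k + 1 → T.dist b c = k → T.dist a d = k →
    ∃ w : T.lineGraph.Walk ⟨s(a,b), (T.mem_edgeSet).mpr hab⟩ ⟨s(c,d), (T.mem_edgeSet).mpr hcd⟩,
      w.length = k := by
  intro k
  induction k with
  | zero =>
    intro a b c d hab hcd h1 h2 h3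
    have hbc : b = c := (hT.isConnected.dist_eq_zero_iff).mp h2
    have had : a = d := (hT.isConnected.dist_eq_zero_iff).mp h3
    have he : (⟨s(a,b), (T.mem_edgeSet).mpr hab⟩ : T.edgeSet)
        = ⟨s(c,d), (T.mem_edgeSet).mpr hcd⟩ := by
      subst hbc; subst had
      exact Subtype.ext Sym2.eq_swap
    exact ⟨SimpleGraph.Walk.nil.copy rfl he, by simp⟩
  | succ k ih =>
    intro a b c d hab hcd h1 h2 h3
    -- show dist b d = k
    have hbd_le : T.dist b d ≤ k + 1 := by
      have e1 : pth hT a c = SimpleGraph.Walk.cons hab (pth hT b c) :=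
        pth_cons hT hab (by omega)
      have e2 : pth hT c a = SimpleGraph.Walk.cons hcd (pth hT d a) :=
        pth_cons hT hcd (by rw [SimpleGraph.dist_comm (u := d), SimpleGraph.dist_comm (u := c)]; omega)
      have hd : d ∈ (pth hT a c).support := by
        rw [pth_reverse hT a c, SimpleGraph.Walk.support_reverse, List.mem_reverse, e2,
          SimpleGraph.Walk.support_cons]
        exact List.mem_cons_of_mem _ (SimpleGraph.Walk.start_mem_support _)
      rw [e1, SimpleGraph.Walk.support_cons] at hd
      have had : a ≠ d := by
        intro h; subst h; rw [SimpleGraph.dist_self] at h3; omega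
      have hd' : d ∈ (pth hT b c).support := by
        rcases List.mem_cons.mp hd with h | h
        · exact absurd h.symm had
        · exact h
      calc T.dist b d ≤ ((pth hT b c).takeUntil d hd').length :=
            SimpleGraph.dist_le _
        _ ≤ (pth hT b c).length := SimpleGraph.Walk.length_takeUntil_le _ _
        _ = k + 1 := by rw [pth_length]; exact h2
    have hbd : T.dist b d = k := by
      have := adj_dist_cases hT hcd b
      rw [SimpleGraph.dist_comm (u := c), SimpleGraph.dist_comm (u := d)] at this
      omega
    obtain ⟨b', hbb', hb'c⟩ := exists_next hT h2
    obtain ⟨w, hw⟩ := ih b b' c d hbb' hcd h2 hb'c hbd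
    have hadjL : T.lineGraph.Adj ⟨s(a,b), (T.mem_edgeSet).mpr hab⟩
        ⟨s(b,b'), (T.mem_edgeSet).mpr hbb'⟩ := by
      rw [lineGraph_adj_iff_exists]
      constructor
      · intro hEq
        have := Subtype.ext_iff.mp hEq
        rcases Sym2.eq_iff.mp this with ⟨h', _⟩ | ⟨h', h''⟩
        · exact hab.ne h'
        · subst h'; omega
      · exact ⟨b, by simp, by simp⟩
    exact ⟨SimpleGraph.Walk.cons hadjL w, by simp [hw]⟩


lemma edge_repr (e : T.edgeSet) :
    ∃ a b, ∃ h : T.Adj a b, e = ⟨s(a,b), (T.mem_edgeSet).mpr h⟩ := by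
  obtain ⟨ev, hev⟩ := e
  induction ev using Sym2.ind with
  | _ a b => exact ⟨a, b, (T.mem_edgeSet).mp hev, rfl⟩

lemma master (hT : T.IsTree) (e f : T.edgeSet) :
    ∃ u v, u ∈ (e : Sym2 V) ∧ v ∈ (f : Sym2 V) ∧
      T.dist u v = T.lineGraph.dist e f + 1 ∧
      ∀ u' v', u' ∈ (e : Sym2 V) → v' ∈ (f : Sym2 V) →
        T.dist u' v' ≤ T.lineGraph.dist e f + 1 := by
  obtain ⟨a, b, hab, rfl⟩ := edge_repr e
  obtain ⟨c, d, hcd, rfl⟩ := edge_repr f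
  -- pick a far pair
  obtain ⟨⟨u, v⟩, hmem, hmax⟩ :=
    ({(a,c), (a,d), (b,c), (b,d)} : Finset (V × V)).exists_max_image
      (fun p => T.dist p.1 p.2) ⟨(a,c), by simp⟩
  simp only [mem_insert, mem_singleton, Prod.mk.injEq] at hmem
  have hm1 : T.dist a c ≤ T.dist u v := hmax (a,c) (by simp)
  have hm2 : T.dist a d ≤ T.dist u v := hmax (a,d) (by simp)
  have hm3 : T.dist b c ≤ T.dist u v := hmax (b,c) (by simp)
  have hm4 : T.dist b d ≤ T.dist u v := hmax (b,d) (by simp)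
  have hmax' : ∀ u' v', u' ∈ (s(a,b) : Sym2 V) → v' ∈ (s(c,d) : Sym2 V) →
      T.dist u' v' ≤ T.dist u v := by
    intro u' v' hu hv
    rw [Sym2.mem_iff] at hu hv
    rcases hu with rfl | rfl <;> rcases hv with rfl | rfl <;> assumption
  have hpos : 1 ≤ T.dist u v := by
    by_contra h
    have h0 : T.dist u v = 0 := by omega
    have hac : T.dist a c = 0 := le_antisymm (h0 ▸ hmax' a c (by simp) (by simp)) (Nat.zero_le _)
    have had : T.dist a d = 0 := le_antisymm (h0 ▸ hmax' a d (by simp) (by simp)) (Nat.zero_le _)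
    have h1 : a = c := (hT.isConnected.dist_eq_zero_iff).mp hac
    have h2 : a = d := (hT.isConnected.dist_eq_zero_iff).mp had
    exact hcd.ne (h1 ▸ h2 ▸ rfl)
  -- in each of the four cases, build a line-graph walk of length dist u v - 1
  have hwalk : ∃ w : T.lineGraph.Walk ⟨s(a,b), (T.mem_edgeSet).mpr hab⟩
      ⟨s(c,d), (T.mem_edgeSet).mpr hcd⟩, w.length + 1 = T.dist u v := by
    obtain ⟨k, hk⟩ : ∃ k, T.dist u v = k + 1 := ⟨T.dist u v - 1, by omega⟩
    rcases hmem with ⟨hu1, hv1⟩ | ⟨hu1, hv1⟩ | ⟨hu1, hv1⟩ | ⟨hu1, hv1⟩ <;> rw [hu1, hv1] at hk hmax' ⊢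
    · -- (a, c)
      have h2 : T.dist b c = k := by
        have hle := hmax' b c (by simp) (by simp)
        have := adj_dist_cases hT hab c
        omega
      have h3 : T.dist a d = k := by
        have hle := hmax' a d (by simp) (by simp)
        have := adj_dist_cases hT hcd a
        rw [SimpleGraph.dist_comm (u := c), SimpleGraph.dist_comm (u := d)] at this
        omega
      obtain ⟨w, hw⟩ := line_upper hT k a b c d hab hcd hk h2 h3
      exact ⟨w, by omega⟩
    · -- (a, d)
      have h2 : T.dist b d = k := by
        have hle := hmax' b d (by simp) (by simp)
        have := adj_dist_cases hT hab d
        omega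
      have h3 : T.dist a c = k := by
        have hle := hmax' a c (by simp) (by simp)
        have := adj_dist_cases hT hcd.symm a
        rw [SimpleGraph.dist_comm (u := c), SimpleGraph.dist_comm (u := d)] at this
        omega
      obtain ⟨w, hw⟩ := line_upper hT k a b d c hab hcd.symm hk h2 h3
      have hfe : (⟨s(d,c), (T.mem_edgeSet).mpr hcd.symm⟩ : T.edgeSet)
          = ⟨s(c,d), (T.mem_edgeSet).mpr hcd⟩ := Subtype.ext Sym2.eq_swap
      exact ⟨w.copy rfl hfe, by simpa using hw ▸ (by omega : w.length + 1 = T.dist a d)⟩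
    · -- (b, c)
      have h2 : T.dist a c = k := by
        have hle := hmax' a c (by simp) (by simp)
        have := adj_dist_cases hT hab.symm c
        omega
      have h3 : T.dist b d = k := by
        have hle := hmax' b d (by simp) (by simp)
        have := adj_dist_cases hT hcd b
        rw [SimpleGraph.dist_comm (u := c), SimpleGraph.dist_comm (u := d)] at this
        omega
      obtain ⟨w, hw⟩ := line_upper hT k b a c d hab.symm hcd hk h2 h3
      have hfe : (⟨s(b,a), (T.mem_edgeSet).mpr hab.symm⟩ : T.edgeSet)
          = ⟨s(a,b), (T.mem_edgeSet).mpr hab⟩ := Subtype.ext Sym2.eq_swap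
      exact ⟨w.copy hfe rfl, by simpa using hw ▸ (by omega : w.length + 1 = T.dist b c)⟩
    · -- (b, d)
      have h2 : T.dist a d = k := by
        have hle := hmax' a d (by simp) (by simp)
        have := adj_dist_cases hT hab.symm d
        omega
      have h3 : T.dist b c = k := by
        have hle := hmax' b c (by simp) (by simp)
        have := adj_dist_cases hT hcd.symm b
        rw [SimpleGraph.dist_comm (u := c), SimpleGraph.dist_comm (u := d)] at this
        omega
      obtain ⟨w, hw⟩ := line_upper hT k b a d c hab.symm hcd.symm hk h2 h3
      have hfe1 : (⟨s(b,a), (T.mem_edgeSet).mpr hab.symm⟩ : T.edgeSet)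
          = ⟨s(a,b), (T.mem_edgeSet).mpr hab⟩ := Subtype.ext Sym2.eq_swap
      have hfe2 : (⟨s(d,c), (T.mem_edgeSet).mpr hcd.symm⟩ : T.edgeSet)
          = ⟨s(c,d), (T.mem_edgeSet).mpr hcd⟩ := Subtype.ext Sym2.eq_swap
      exact ⟨w.copy hfe1 hfe2, by simpa using hw ▸ (by omega : w.length + 1 = T.dist b d)⟩
  obtain ⟨w, hw⟩ := hwalk
  have hreach : T.lineGraph.Reachable _ _ := ⟨w⟩
  have hup : T.lineGraph.dist _ _ + 1 ≤ T.dist u v :=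
    le_trans (Nat.add_le_add_right (SimpleGraph.dist_le w) 1) (le_of_eq hw)
  obtain ⟨ws, hws⟩ := hreach.exists_walk_length_eq_dist
  have hlow := line_walk_bound hT ws
  rw [hws] at hlow
  have hu : u ∈ (s(a,b) : Sym2 V) := by
    rcases hmem with ⟨h', _⟩ | ⟨h', _⟩ | ⟨h', _⟩ | ⟨h', _⟩ <;> rw [h'] <;> simp
  have hv : v ∈ (s(c,d) : Sym2 V) := by
    rcases hmem with ⟨_, h'⟩ | ⟨_, h'⟩ | ⟨_, h'⟩ | ⟨_, h'⟩ <;> rw [h'] <;> simp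
  have heq : T.dist u v = T.lineGraph.dist _ _ + 1 :=
    le_antisymm (hlow u v hu hv) hup
  exact ⟨u, v, hu, hv, heq, fun u' v' hu' hv' => hlow u' v' hu' hv'⟩


lemma sdist_mk {W : Type*} (G : SimpleGraph W) (a b : W) :
    sdist G s(a, b) = G.dist a b := rfl

lemma sdist_out {W : Type*} (G : SimpleGraph W) (p : Sym2 W) :
    sdist G p = G.dist p.out.1 p.out.2 := by
  conv_lhs => rw [← Quot.out_eq p]
  rfl

lemma edge_unique (hT : T.IsTree) {u v : V} {e e' : T.edgeSet}
    (h1 : u ∈ (e : Sym2 V)) (h2 : ∀ x, x ∈ (e : Sym2 V) → T.dist x v ≤ T.dist u v)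
    (h1' : u ∈ (e' : Sym2 V)) (h2' : ∀ x, x ∈ (e' : Sym2 V) → T.dist x v ≤ T.dist u v) :
    e = e' := by
  obtain ⟨x, hx⟩ := Sym2.mem_iff_exists.mp h1
  obtain ⟨x', hx'⟩ := Sym2.mem_iff_exists.mp h1'
  have hadjx : T.Adj u x := (T.mem_edgeSet).mp (hx ▸ e.2)
  have hadjx' : T.Adj u x' := (T.mem_edgeSet).mp (hx' ▸ e'.2)
  have hlt : T.dist x v < T.dist u v :=
    lt_of_le_of_ne (h2 x (by rw [hx]; simp)) (Ne.symm (adj_dist_ne hT hadjx v))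
  have hlt' : T.dist x' v < T.dist u v :=
    lt_of_le_of_ne (h2' x' (by rw [hx']; simp)) (Ne.symm (adj_dist_ne hT hadjx' v))
  have : x = x' := desc_unique hT hadjx hadjx' hlt hlt'
  exact Subtype.ext (hx.trans (this ▸ hx'.symm))

lemma pair_unique (hT : T.IsTree) {e f e' f' : T.edgeSet} {u v u' v' : V}
    (hu : u ∈ (e : Sym2 V)) (hv : v ∈ (f : Sym2 V))
    (hm : ∀ x y, x ∈ (e : Sym2 V) → y ∈ (f : Sym2 V) → T.dist x y ≤ T.dist u v)
    (hu' : u' ∈ (e' : Sym2 V)) (hv' : v' ∈ (f' : Sym2 V))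
    (hm' : ∀ x y, x ∈ (e' : Sym2 V) → y ∈ (f' : Sym2 V) → T.dist x y ≤ T.dist u' v')
    (h : s(u, v) = s(u', v')) : s(e, f) = s(e', f') := by
  rcases Sym2.eq_iff.mp h with ⟨rfl, rfl⟩ | ⟨rfl, rfl⟩
  · have hE : e = e' := edge_unique hT (v := v) hu (fun x hx => hm x v hx hv)
      hu' (fun x hx => hm' x v hx hv')
    have hF : f = f' := by
      refine edge_unique hT (v := u) hv (fun x hx => ?_) hv' (fun x hx => ?_)
      · rw [SimpleGraph.dist_comm, SimpleGraph.dist_comm (u := v)]; exact hm u x hu hx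
      · rw [SimpleGraph.dist_comm, SimpleGraph.dist_comm (u := v)]; exact hm' u x hu' hx
    rw [hE, hF]
  · -- here u' = v and v' = u (swapped)
    have hE : e = f' := edge_unique hT (v := v) hu (fun x hx => hm x v hx hv) hv'
      (fun x hx => by
        rw [SimpleGraph.dist_comm, SimpleGraph.dist_comm (u := u)]
        exact hm' v x hu' hx)
    have hF : f = e' := by
      refine edge_unique hT (v := u) hv (fun x hx => ?_) hu' (fun x hx => ?_)
      · rw [SimpleGraph.dist_comm, SimpleGraph.dist_comm (u := v)]; exact hm u x hu hx
      · exact hm' x u hx hv'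
    rw [hE, hF, Sym2.eq_swap]

noncomputable def farPair (hT : T.IsTree) (p : Sym2 T.edgeSet) : Sym2 V :=
  s((master hT p.out.1 p.out.2).choose,
    (master hT p.out.1 p.out.2).choose_spec.choose)

lemma farPair_spec (hT : T.IsTree) (p : Sym2 T.edgeSet) :
    sdist T (farPair hT p) = sdist T.lineGraph p + 1 := by
  obtain ⟨hu, hv, hd, hm⟩ := (master hT p.out.1 p.out.2).choose_spec.choose_spec
  rw [farPair, sdist_mk, sdist_out, hd]

lemma farPair_inj (hT : T.IsTree) : Function.Injective (farPair hT) := by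
  intro p q h
  obtain ⟨hu1, hv1, hd1, hm1⟩ := (master hT p.out.1 p.out.2).choose_spec.choose_spec
  obtain ⟨hu2, hv2, hd2, hm2⟩ := (master hT q.out.1 q.out.2).choose_spec.choose_spec
  rw [← hd1] at hm1
  rw [← hd2] at hm2
  have hpq := pair_unique hT hu1 hv1 hm1 hu2 hv2 hm2 h
  calc p = s(p.out.1, p.out.2) := (Quot.out_eq p).symm
    _ = s(q.out.1, q.out.2) := hpq
    _ = q := Quot.out_eq q

lemma farPair_not_isDiag (hT : T.IsTree) (p : Sym2 T.edgeSet) : ¬ (farPair hT p).IsDiag := by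
  intro hdiag
  have h1 := farPair_spec hT p
  have h0 : sdist T (farPair hT p) = 0 := by
    obtain ⟨a, ha⟩ := (⟨_, Sym2.diag_diagElem hdiag⟩ : ∃ a, Sym2.diag a = farPair hT p)
    rw [← ha]
    show sdist T s(a, a) = 0
    rw [sdist_mk, SimpleGraph.dist_self]
  omega


end Stmt7Aux

set_option maxHeartbeats 1000000 in
open Stmt7Aux in
/-- For a finite tree `T` on `n` vertices,
`W_e(T) = W(T) - n(n-1)/2`. -/
theorem stmt7 {V : Type*} [Fintype V] [DecidableEq V] (T : SimpleGraph V)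
    [DecidableRel T.Adj] (hT : T.IsTree) :
    (edgeWienerIndex T : ℝ) =
      (wienerIndex T : ℝ) - (Fintype.card V : ℝ) * (Fintype.card V - 1) / 2 := by
  classical
  set n := Fintype.card V with hn
  have hE : Fintype.card T.edgeSet + 1 = n := by
    rw [← SimpleGraph.edgeFinset_card]
    exact hT.card_edgeFinset
  have hSym2E : Fintype.card (Sym2 T.edgeSet) = n.choose 2 := by
    rw [Sym2.card, hE]
  set S : Finset (Sym2 V) := Finset.univ.filter (fun q => ¬ q.IsDiag) with hS
  have hdiagcard : (Finset.univ.filter (fun q : Sym2 V => q.IsDiag)).card = n := by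
    have himg : Finset.univ.filter (fun q : Sym2 V => q.IsDiag)
        = Finset.univ.image Sym2.diag := by
      ext q
      simp [Set.mem_range, eq_comm]
      exact ⟨fun h => ⟨_, (Sym2.diag_diagElem h).symm⟩, by rintro ⟨a, rfl⟩; exact Sym2.diag_isDiag a⟩
    rw [himg, Finset.card_image_of_injective _ Sym2.diag_injective, Finset.card_univ]
  have hScard : S.card = n.choose 2 := by
    have h2 := Finset.card_filter_add_card_filter_not
      (s := (Finset.univ : Finset (Sym2 V))) (p := fun q : Sym2 V => q.IsDiag)
    have h3 : (Finset.univ : Finset (Sym2 V)).card = (n + 1).choose 2 := by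
      rw [Finset.card_univ, Sym2.card]
    have h4 : (n + 1).choose 2 = n.choose 1 + n.choose 2 := Nat.choose_succ_succ n 1
    have h5 : n.choose 1 = n := Nat.choose_one_right n
    rw [hS]
    omega
  have himage : Finset.univ.image (farPair hT) ⊆ S := by
    intro q hq
    obtain ⟨p, _, rfl⟩ := Finset.mem_image.mp hq
    simp only [hS, Finset.mem_filter, Finset.mem_univ, true_and]
    exact farPair_not_isDiag hT p
  have himEq : Finset.univ.image (farPair hT) = S := by
    refine Finset.eq_of_subset_of_card_le himage ?_
    rw [hScard, Finset.card_image_of_injective _ (farPair_inj hT), Finset.card_univ, hSym2E]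
  have hNat : wienerIndex T = edgeWienerIndex T + n.choose 2 := by
    have s1 : wienerIndex T = ∑ q ∈ S, sdist T q := by
      rw [wienerIndex]
      refine (Finset.sum_subset (Finset.subset_univ S) (fun q _ hq => ?_)).symm
      have hd : q.IsDiag := by simpa [hS] using hq
      obtain ⟨a, ha⟩ := (⟨_, Sym2.diag_diagElem hd⟩ : ∃ a, Sym2.diag a = q)
      rw [← ha]
      show sdist T s(a, a) = 0
      show T.dist a a = 0
      exact SimpleGraph.dist_self
    rw [s1, ← himEq, Finset.sum_image (fun x _ y _ h => farPair_inj hT h)]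
    rw [Finset.sum_congr rfl (fun p _ => farPair_spec hT p), Finset.sum_add_distrib,
      Finset.sum_const, smul_eq_mul, mul_one, Finset.card_univ, hSym2E]
    rfl
  have hcast : (wienerIndex T : ℝ) = (edgeWienerIndex T : ℝ) + (n.choose 2 : ℝ) := by
    exact_mod_cast congrArg (Nat.cast : ℕ → ℝ) hNat
  rw [Nat.cast_choose_two] at hcast
  rw [hn] at hcast ⊢
  linarith
end

section
/- Let T be a finite tree. Then the edge-hyper-Wiener index of T equals the hyper-Wiener index minus the Wiener index: WW_e(T) = WW(T) − W(T). -/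
open SimpleGraph Polynomial Finset

set_option linter.unusedSectionVars false

namespace TreeAux

open SimpleGraph Walk

variable {V : Type*} [DecidableEq V] {T : SimpleGraph V}

/-- The unique path between two vertices in a tree. -/
noncomputable def pathUV (hT : T.IsTree) (u v : V) : T.Walk u v :=
  (hT.existsUnique_path u v).choose

lemma pathUV_isPath (hT : T.IsTree) (u v : V) : (pathUV hT u v).IsPath :=
  (hT.existsUnique_path u v).choose_spec.1

lemma pathUV_unique (hT : T.IsTree) {u v : V} (p : T.Walk u v) (hp : p.IsPath) :
    p = pathUV hT u v :=
  (hT.existsUnique_path u v).choose_spec.2 p hp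

lemma pathUV_length (hT : T.IsTree) (u v : V) : (pathUV hT u v).length = T.dist u v := by
  obtain ⟨p, hp⟩ := hT.isConnected.exists_walk_length_eq_dist u v
  rw [← pathUV_unique hT p (p.isPath_of_length_eq_dist hp)]
  exact hp

/-- The next vertex on the unique path from `u` to `v`. -/
noncomputable def nxt (hT : T.IsTree) (u v : V) : V := (pathUV hT u v).getVert 1

lemma nxt_def (hT : T.IsTree) (u v : V) : nxt hT u v = (pathUV hT u v).getVert 1 := rfl

lemma pathUV_not_nil (hT : T.IsTree) {u v : V} (h : T.dist u v ≠ 0) :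
    ¬ (pathUV hT u v).Nil := by
  rw [Walk.not_nil_iff_lt_length, pathUV_length]
  omega

lemma adj_nxt (hT : T.IsTree) {u v : V} (h : T.dist u v ≠ 0) : T.Adj u (nxt hT u v) :=
  Walk.adj_snd (pathUV_not_nil hT h)

lemma dist_nxt (hT : T.IsTree) {u v : V} (h : T.dist u v ≠ 0) :
    T.dist (nxt hT u v) v + 1 = T.dist u v := by
  have h1 : T.dist (nxt hT u v) v ≤ (pathUV hT u v).tail.length := dist_le _
  have h2 : (pathUV hT u v).tail.length + 1 = (pathUV hT u v).length :=
    Walk.length_tail_add_one (pathUV_not_nil hT h)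
  have h3 : (pathUV hT u v).length = T.dist u v := pathUV_length hT u v
  have h4 : T.dist u v ≤ T.dist u (nxt hT u v) + T.dist (nxt hT u v) v :=
    hT.isConnected.dist_triangle
  have h5 : T.dist u (nxt hT u v) ≤ 1 := by
    have := dist_le (adj_nxt hT h).toWalk
    simpa using this
  omega

lemma eq_nxt_of (hT : T.IsTree) {u v w : V} (ha : T.Adj u w)
    (hd : T.dist w v + 1 = T.dist u v) : w = nxt hT u v := by
  have hns : u ∉ (pathUV hT w v).support := by
    intro hmem
    have hsplit := congrArg Walk.length ((pathUV hT w v).take_spec hmem)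
    rw [Walk.length_append] at hsplit
    have h1 : T.dist w u ≤ ((pathUV hT w v).takeUntil u hmem).length := dist_le _
    have h2 : T.dist u v ≤ ((pathUV hT w v).dropUntil u hmem).length := dist_le _
    have h3 : (pathUV hT w v).length = T.dist w v := pathUV_length hT w v
    have h4 : 0 < T.dist w u := hT.isConnected.pos_dist_of_ne ha.ne'
    omega
  have hp : (Walk.cons ha (pathUV hT w v)).IsPath := (pathUV_isPath hT w v).cons hns
  have he := pathUV_unique hT _ hp
  rw [nxt_def, ← he, Walk.getVert_cons_succ, Walk.getVert_zero]

lemma pathUV_rev (hT : T.IsTree) (u v : V) : pathUV hT v u = (pathUV hT u v).reverse :=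
  (pathUV_unique hT _ ((pathUV_isPath hT u v).reverse)).symm

lemma nxt_rev (hT : T.IsTree) (u v : V) :
    nxt hT v u = (pathUV hT u v).getVert (T.dist u v - 1) := by
  rw [nxt_def, pathUV_rev, Walk.getVert_reverse, pathUV_length]

lemma dist_ne_of_adj (hT : T.IsTree) {u w : V} (ha : T.Adj u w) (v : V) :
    T.dist u v ≠ T.dist w v := by
  intro he
  by_cases h0 : T.dist u v = 0
  · have hu : u = v := (hT.isConnected.dist_eq_zero_iff).mp h0
    have hw : w = v := (hT.isConnected.dist_eq_zero_iff).mp (he ▸ h0)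
    exact ha.ne (hu.trans hw.symm)
  · have hns : u ∉ (pathUV hT w v).support := by
      intro hmem
      have hsplit := congrArg Walk.length ((pathUV hT w v).take_spec hmem)
      rw [Walk.length_append] at hsplit
      have h1 : T.dist w u ≤ ((pathUV hT w v).takeUntil u hmem).length := dist_le _
      have h2 : T.dist u v ≤ ((pathUV hT w v).dropUntil u hmem).length := dist_le _
      have h3 : (pathUV hT w v).length = T.dist w v := pathUV_length hT w v
      have h4 : 0 < T.dist w u := hT.isConnected.pos_dist_of_ne ha.ne'
      omega
    have hp : (Walk.cons ha (pathUV hT w v)).IsPath := (pathUV_isPath hT w v).cons hns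
    have h5 := congrArg Walk.length (pathUV_unique hT _ hp)
    rw [Walk.length_cons, pathUV_length, pathUV_length] at h5
    omega

lemma dist_nxt_nxt (hT : T.IsTree) {u v : V} (h : 2 ≤ T.dist u v) :
    T.dist (nxt hT u v) (nxt hT v u) + 2 = T.dist u v := by
  set P := pathUV hT u v with hP
  have hlen : P.length = T.dist u v := pathUV_length hT u v
  have hnp : ¬ P.Nil := by rw [Walk.not_nil_iff_lt_length]; omega
  have htl : P.tail.length + 1 = P.length := Walk.length_tail_add_one hnp
  have hnt : ¬ P.tail.Nil := by rw [Walk.not_nil_iff_lt_length]; omega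
  have hntr : ¬ P.tail.reverse.Nil := by
    rw [Walk.not_nil_iff_lt_length, Walk.length_reverse]; omega
  have htr : P.tail.reverse.tail.length + 1 = P.tail.reverse.length :=
    Walk.length_tail_add_one hntr
  have hv : P.tail.reverse.getVert 1 = nxt hT v u := by
    rw [Walk.getVert_reverse, Walk.getVert_tail _, nxt_rev hT u v, ← hP, ← hlen]
    congr 1
    omega
  have hd : T.dist (P.tail.reverse.getVert 1) (P.getVert 1) ≤ P.tail.reverse.tail.length :=
    dist_le _
  have hd' : T.dist (nxt hT v u) (nxt hT u v) ≤ P.tail.reverse.tail.length := by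
    rw [← hv]; exact hd
  have hq : T.dist (nxt hT v u) (nxt hT u v) ≤ T.dist u v - 2 := by
    rw [Walk.length_reverse] at htr
    exact le_trans hd' (by omega)
  have hcomm : T.dist (nxt hT u v) (nxt hT v u) = T.dist (nxt hT v u) (nxt hT u v) :=
    SimpleGraph.dist_comm
  have h4 : T.dist u v ≤ T.dist u (nxt hT u v) + T.dist (nxt hT u v) v :=
    hT.isConnected.dist_triangle
  have h4' : T.dist (nxt hT u v) v ≤ T.dist (nxt hT u v) (nxt hT v u) + T.dist (nxt hT v u) v :=
    hT.isConnected.dist_triangle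
  have hne : T.dist u v ≠ 0 := by omega
  have hne' : T.dist v u ≠ 0 := by rw [SimpleGraph.dist_comm]; omega
  have h5 : T.dist u (nxt hT u v) ≤ 1 := by
    have := dist_le (adj_nxt hT hne).toWalk; simpa using this
  have h6 : T.dist (nxt hT v u) v ≤ 1 := by
    have : T.dist v (nxt hT v u) ≤ 1 := by
      have := dist_le (adj_nxt hT hne').toWalk
      simpa using this
    rwa [SimpleGraph.dist_comm]
  omega


section E1

variable (hT : T.IsTree) [Nonempty T.edgeSet]

/-- The first edge on the unique path from `u` to `v`. -/
noncomputable def E1 (u v : V) : T.edgeSet :=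
  if h : T.dist u v ≠ 0 then ⟨s(u, nxt hT u v), T.mem_edgeSet.mpr (adj_nxt hT h)⟩
  else Classical.arbitrary _

lemma E1_val {u v : V} (h : T.dist u v ≠ 0) :
    (E1 hT u v : Sym2 V) = s(u, nxt hT u v) := by
  rw [E1, dif_pos h]

lemma mem_E1 {u v : V} (h : T.dist u v ≠ 0) : u ∈ (E1 hT u v : Sym2 V) := by
  rw [E1_val hT h]; exact Sym2.mem_mk_left u _

lemma nxt_nxt {u v : V} (h : 2 ≤ T.dist u v) :
    nxt hT v (nxt hT u v) = nxt hT v u := by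
  have hne : T.dist u v ≠ 0 := by omega
  have hne' : T.dist v u ≠ 0 := by rw [SimpleGraph.dist_comm]; omega
  have h1 := dist_nxt hT hne
  have h2 := dist_nxt_nxt hT h
  have h3 : T.dist (nxt hT v u) (nxt hT u v) + 1 = T.dist v (nxt hT u v) := by
    rw [SimpleGraph.dist_comm (u := nxt hT v u), SimpleGraph.dist_comm (u := v)]
    omega
  exact (eq_nxt_of hT (adj_nxt hT hne') h3).symm

lemma E1_nxt {u v : V} (h : 2 ≤ T.dist u v) :
    E1 hT v (nxt hT u v) = E1 hT v u := by
  have hne : T.dist u v ≠ 0 := by omega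
  have hne' : T.dist v u ≠ 0 := by rw [SimpleGraph.dist_comm]; omega
  have h1 := dist_nxt hT hne
  have hne2 : T.dist v (nxt hT u v) ≠ 0 := by
    rw [SimpleGraph.dist_comm]; omega
  apply Subtype.ext
  rw [E1_val hT hne2, E1_val hT hne', nxt_nxt hT h]

lemma exists_lineWalk : ∀ (n : ℕ) (u v : V), T.dist u v = n + 1 →
    ∃ W : T.lineGraph.Walk (E1 hT u v) (E1 hT v u), W.length = n := by
  intro n
  induction n with
  | zero =>
    intro u v h
    have hne : T.dist u v ≠ 0 := by omega
    have hne' : T.dist v u ≠ 0 := by rw [SimpleGraph.dist_comm]; omega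
    have h1 : nxt hT u v = v := by
      rw [nxt_def]
      exact Walk.getVert_of_length_le _ (by rw [pathUV_length]; omega)
    have h2 : nxt hT v u = u := by
      rw [nxt_def]
      refine Walk.getVert_of_length_le _ ?_
      rw [pathUV_length, SimpleGraph.dist_comm]; omega
    have he : E1 hT u v = E1 hT v u := by
      apply Subtype.ext
      rw [E1_val hT hne, E1_val hT hne', h1, h2, Sym2.eq_swap]
    exact ⟨(Walk.nil).copy rfl he, by simp⟩
  | succ n ih =>
    intro u v h
    have hne : T.dist u v ≠ 0 := by omega
    have hd := dist_nxt hT hne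
    have h2 : T.dist (nxt hT u v) v = n + 1 := by omega
    obtain ⟨W, hW⟩ := ih (nxt hT u v) v h2
    have hE : E1 hT v (nxt hT u v) = E1 hT v u := E1_nxt hT (by omega)
    have hne2 : T.dist (nxt hT u v) v ≠ 0 := by omega
    have hadj : T.lineGraph.Adj (E1 hT u v) (E1 hT (nxt hT u v) v) := by
      rw [lineGraph_adj_iff_exists]
      constructor
      · intro heq
        have hval := congrArg Subtype.val heq
        rw [E1_val hT hne, E1_val hT hne2] at hval
        rcases Sym2.eq_iff.mp hval with ⟨h3, _⟩ | ⟨h3, _⟩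
        · exact (adj_nxt hT hne).ne h3
        · have := dist_nxt hT hne2
          rw [← h3] at this
          omega
      · refine ⟨nxt hT u v, ?_, ?_⟩
        · rw [E1_val hT hne]; exact Sym2.mem_mk_right _ _
        · exact mem_E1 hT hne2
    exact ⟨(W.copy rfl hE).cons hadj, by simp [hW]⟩

lemma dist_le_one_of_mem {z : Sym2 V} (hz : z ∈ T.edgeSet) {u v : V}
    (hu : u ∈ z) (hv : v ∈ z) : T.dist u v ≤ 1 := by
  by_cases h : u = v
  · subst h; simp [SimpleGraph.dist_self]
  · have hzz : z = s(u, v) := (Sym2.mem_and_mem_iff h).mp ⟨hu, hv⟩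
    subst hzz
    exact le_of_eq (SimpleGraph.dist_eq_one_iff_adj.mpr (T.mem_edgeSet.mp hz))

include hT in
lemma dist_le_lineWalk {e f : T.edgeSet} (W : T.lineGraph.Walk e f) :
    ∀ {u v : V}, u ∈ (e : Sym2 V) → v ∈ (f : Sym2 V) → T.dist u v ≤ W.length + 1 := by
  induction W with
  | nil =>
    rename_i e
    intro u v hu hv
    simpa using dist_le_one_of_mem e.2 hu hv
  | cons h W ih =>
    rename_i e e' f'
    intro u v hu hv
    obtain ⟨hne, w, hw1, hw2⟩ := lineGraph_adj_iff_exists.mp h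
    have t1 : T.dist u v ≤ T.dist u w + T.dist w v := hT.isConnected.dist_triangle
    have t2 : T.dist u w ≤ 1 := dist_le_one_of_mem e.2 hu hw1
    have t3 : T.dist w v ≤ W.length + 1 := ih hw2 hv
    rw [Walk.length_cons]
    omega

lemma lineDist {u v : V} (h : 2 ≤ T.dist u v) :
    T.lineGraph.dist (E1 hT u v) (E1 hT v u) + 1 = T.dist u v := by
  have hne : T.dist u v ≠ 0 := by omega
  have hne' : T.dist v u ≠ 0 := by rw [SimpleGraph.dist_comm]; omega
  obtain ⟨W, hW⟩ := exists_lineWalk hT (T.dist u v - 1) u v (by omega)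
  have up : T.lineGraph.dist (E1 hT u v) (E1 hT v u) ≤ T.dist u v - 1 := hW ▸ dist_le W
  obtain ⟨W0, hW0⟩ := (Walk.reachable W).exists_walk_length_eq_dist
  have low := dist_le_lineWalk hT W0 (mem_E1 hT hne) (mem_E1 hT hne')
  rw [hW0] at low
  omega

lemma E1_ne {u v : V} (h : 2 ≤ T.dist u v) : E1 hT u v ≠ E1 hT v u := by
  have hne : T.dist u v ≠ 0 := by omega
  have hne' : T.dist v u ≠ 0 := by rw [SimpleGraph.dist_comm]; omega
  intro heq
  have hval := congrArg Subtype.val heq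
  rw [E1_val hT hne, E1_val hT hne'] at hval
  rcases Sym2.eq_iff.mp hval with ⟨h3, _⟩ | ⟨h3, _⟩
  · rw [h3, SimpleGraph.dist_self] at h; omega
  · have hd := dist_nxt hT hne'
    rw [← h3, SimpleGraph.dist_self] at hd
    have hcm : T.dist v u = T.dist u v := SimpleGraph.dist_comm
    omega

include hT in
lemma nxt_of_max {u w v : V} (ha : T.Adj u w) (h2 : 2 ≤ T.dist u v)
    (hle : T.dist w v ≤ T.dist u v) : nxt hT u v = w := by
  have hne := dist_ne_of_adj hT ha v
  have htri : T.dist u v ≤ T.dist u w + T.dist w v := hT.isConnected.dist_triangle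
  have h1 : T.dist u w ≤ 1 := by
    have := dist_le ha.toWalk; simpa using this
  exact (eq_nxt_of hT ha (by omega)).symm

lemma exists_pair' {a b c d : V} (ha : T.Adj a b) (hc : T.Adj c d)
    (hef : s(a, b) ≠ s(c, d)) :
    ∃ u v : V, 2 ≤ T.dist u v ∧ (E1 hT u v : Sym2 V) = s(a, b) ∧
      (E1 hT v u : Sym2 V) = s(c, d) := by
  obtain ⟨⟨u, v⟩, hmem, hmax⟩ := Finset.exists_max_image
    ({(a, c), (a, d), (b, c), (b, d)} : Finset (V × V)) (fun p => T.dist p.1 p.2)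
    ⟨(a, c), by simp⟩
  simp only [Finset.mem_insert, Finset.mem_singleton, Prod.mk.injEq] at hmax
  have hac : T.dist a c ≤ T.dist u v := hmax (a, c) (by simp)
  have had : T.dist a d ≤ T.dist u v := hmax (a, d) (by simp)
  have hbc : T.dist b c ≤ T.dist u v := hmax (b, c) (by simp)
  have hbd : T.dist b d ≤ T.dist u v := hmax (b, d) (by simp)
  simp only [Finset.mem_insert, Finset.mem_singleton, Prod.mk.injEq] at hmem
  have h2 : 2 ≤ T.dist u v := by
    by_contra hlt
    push_neg at hlt
    have hall : ∀ x y : V, ((x = a ∨ x = b) → (y = c ∨ y = d) → T.dist x y ≤ 1) := by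
      intro x y hx hy
      have hin : T.dist x y ≤ T.dist u v := by
        rcases hx with rfl | rfl <;> rcases hy with rfl | rfl <;> simp_all
      omega
    have hmemf : ∀ x : V, (x = a ∨ x = b) → x ∈ s(c, d) := by
      intro x hx
      have hxc := hall x c hx (Or.inl rfl)
      have hxd := hall x d hx (Or.inr rfl)
      have hne : T.dist x c ≠ T.dist x d := by
        rw [SimpleGraph.dist_comm, SimpleGraph.dist_comm (u := x)]
        exact dist_ne_of_adj hT hc x
      have : T.dist x c = 0 ∨ T.dist x d = 0 := by omega
      rcases this with h0 | h0
      · rw [hT.isConnected.dist_eq_zero_iff.mp h0]; exact Sym2.mem_mk_left _ _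
      · rw [hT.isConnected.dist_eq_zero_iff.mp h0]; exact Sym2.mem_mk_right _ _
    have hsab : s(c, d) = s(a, b) :=
      (Sym2.mem_and_mem_iff ha.ne).mp ⟨hmemf a (Or.inl rfl), hmemf b (Or.inr rfl)⟩
    exact hef hsab.symm
  have hne : T.dist u v ≠ 0 := by omega
  have hne' : T.dist v u ≠ 0 := by rw [SimpleGraph.dist_comm]; omega
  have h2' : 2 ≤ T.dist v u := by rw [SimpleGraph.dist_comm]; omega
  refine ⟨u, v, h2, ?_, ?_⟩
  · rw [E1_val hT hne]
    rcases hmem with ⟨rfl, rfl⟩ | ⟨rfl, rfl⟩ | ⟨rfl, rfl⟩ | ⟨rfl, rfl⟩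
    · rw [nxt_of_max hT ha h2 hbc]
    · rw [nxt_of_max hT ha h2 hbd]
    · rw [nxt_of_max hT ha.symm h2 hac, Sym2.eq_swap]
    · rw [nxt_of_max hT ha.symm h2 had, Sym2.eq_swap]
  · rw [E1_val hT hne']
    rcases hmem with ⟨rfl, rfl⟩ | ⟨rfl, rfl⟩ | ⟨rfl, rfl⟩ | ⟨rfl, rfl⟩
    · rw [nxt_of_max hT hc h2' (by
        rw [show T.dist d u = T.dist u d from SimpleGraph.dist_comm,
          show T.dist v u = T.dist u v from SimpleGraph.dist_comm]; exact had)]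
    · rw [nxt_of_max hT hc.symm h2' (by
        rw [show T.dist c u = T.dist u c from SimpleGraph.dist_comm,
          show T.dist v u = T.dist u v from SimpleGraph.dist_comm]; exact hac), Sym2.eq_swap]
    · rw [nxt_of_max hT hc h2' (by
        rw [show T.dist d u = T.dist u d from SimpleGraph.dist_comm,
          show T.dist v u = T.dist u v from SimpleGraph.dist_comm]; exact hbd)]
    · rw [nxt_of_max hT hc.symm h2' (by
        rw [show T.dist c u = T.dist u c from SimpleGraph.dist_comm,
          show T.dist v u = T.dist u v from SimpleGraph.dist_comm]; exact hbc), Sym2.eq_swap]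

lemma inj_aligned {u v u' v' : V} (h : 2 ≤ T.dist u v) (h' : 2 ≤ T.dist u' v')
    (he : E1 hT u v = E1 hT u' v') (hf : E1 hT v u = E1 hT v' u') :
    u = u' ∧ v = v' := by
  have hne : T.dist u v ≠ 0 := by omega
  have hne' : T.dist v u ≠ 0 := by rw [SimpleGraph.dist_comm]; omega
  have kne : T.dist u' v' ≠ 0 := by omega
  have kne' : T.dist v' u' ≠ 0 := by rw [SimpleGraph.dist_comm]; omega
  have heval := congrArg Subtype.val he
  have hfval := congrArg Subtype.val hf
  rw [E1_val hT hne, E1_val hT kne] at heval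
  rw [E1_val hT hne', E1_val hT kne'] at hfval
  have d1 := dist_nxt hT hne
  have d2 := dist_nxt hT hne'
  have d3 := dist_nxt hT kne
  have d4 := dist_nxt hT kne'
  have c1 : T.dist v u = T.dist u v := SimpleGraph.dist_comm
  have c2 : T.dist v' u' = T.dist u' v' := SimpleGraph.dist_comm
  rcases Sym2.eq_iff.mp heval with ⟨hA1, hA2⟩ | ⟨hA1, hA2⟩
  · subst hA1
    rcases Sym2.eq_iff.mp hfval with ⟨hB1, hB2⟩ | ⟨hB1, hB2⟩
    · exact ⟨rfl, hB1⟩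
    · -- v = nxt v' u, nxt v u = v'
      exfalso
      rw [hB2] at d2
      rw [← hB1] at d4
      omega
  · -- u = nxt u' v', nxt u v = u'
    exfalso
    rcases Sym2.eq_iff.mp hfval with ⟨hB1, hB2⟩ | ⟨hB1, hB2⟩
    · -- v = v'
      subst hB1
      rw [hA2] at d1
      rw [← hA1] at d3
      omega
    · -- v = nxt v' u', nxt v u = v'
      rw [hB2] at d2
      rw [← hA1] at d3
      have hmid := dist_nxt_nxt hT h
      rw [hA2, hB2] at hmid
      have c3 : T.dist u v' = T.dist v' u := SimpleGraph.dist_comm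
      omega

lemma edge_rep (e : T.edgeSet) : ∃ a b : V, T.Adj a b ∧ (e : Sym2 V) = s(a, b) := by
  obtain ⟨z, hz⟩ := e
  revert hz
  induction z using Sym2.ind with
  | _ a b => exact fun hz => ⟨a, b, T.mem_edgeSet.mp hz, rfl⟩

end E1

end TreeAux


/- STATEMENT 8: For a finite tree `T`, `WW_e(T) = WW(T) - W(T)`. -/
open TreeAux in
/-- For a finite tree `T`, `WW_e(T) = WW(T) - W(T)`. -/
theorem stmt8 {V : Type*} [Fintype V] [DecidableEq V] (T : SimpleGraph V)
    [DecidableRel T.Adj] (hT : T.IsTree) :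
    edgeHyperWiener T = hyperWiener T - (wienerIndex T : ℝ) := by
  classical
  have sdV : ∀ u v : V, sdist T s(u, v) = T.dist u v := fun _ _ => rfl
  have sdE : ∀ e f : T.edgeSet, sdist T.lineGraph s(e, f) = T.lineGraph.dist e f :=
    fun _ _ => rfl
  have key : ∑ q : Sym2 T.edgeSet,
        ((sdist T.lineGraph q : ℝ) ^ 2 + (sdist T.lineGraph q : ℝ))
      = ∑ p : Sym2 V, ((sdist T p : ℝ) ^ 2 - (sdist T p : ℝ)) := by
    by_cases hE : Nonempty T.edgeSet
    · haveI := hE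
      have e1 : ∑ p ∈ Finset.univ.filter (fun p : Sym2 V => 2 ≤ sdist T p),
            ((sdist T p : ℝ) ^ 2 - (sdist T p : ℝ))
          = ∑ p : Sym2 V, ((sdist T p : ℝ) ^ 2 - (sdist T p : ℝ)) := by
        refine Finset.sum_subset (Finset.filter_subset _ _) ?_
        intro x _ hx
        simp only [Finset.mem_filter, Finset.mem_univ, true_and, not_le] at hx
        have : sdist T x = 0 ∨ sdist T x = 1 := by omega
        rcases this with h | h <;> rw [h] <;> norm_num
      have e2 : ∑ q ∈ Finset.univ.filter (fun q : Sym2 T.edgeSet => ¬ q.IsDiag),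
            ((sdist T.lineGraph q : ℝ) ^ 2 + (sdist T.lineGraph q : ℝ))
          = ∑ q : Sym2 T.edgeSet,
            ((sdist T.lineGraph q : ℝ) ^ 2 + (sdist T.lineGraph q : ℝ)) := by
        refine Finset.sum_subset (Finset.filter_subset _ _) ?_
        intro x _ hx
        simp only [Finset.mem_filter, Finset.mem_univ, true_and, not_not] at hx
        revert hx
        induction x using Sym2.ind with
        | _ e f =>
          intro hx
          rw [Sym2.mk_isDiag_iff] at hx
          subst hx
          rw [sdE, SimpleGraph.dist_self]
          norm_num
      rw [← e1, ← e2]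
      refine (Finset.sum_bij
        (fun p _ => Sym2.lift ⟨fun u v => s(E1 hT u v, E1 hT v u),
          fun _ _ => Sym2.eq_swap⟩ p) ?_ ?_ ?_ ?_).symm
      · -- maps into target
        intro p hp
        induction p using Sym2.ind with
        | _ u v =>
          simp only [Finset.mem_filter, Finset.mem_univ, true_and, sdV] at hp
          simp only [Sym2.lift_mk, Finset.mem_filter, Finset.mem_univ, true_and,
            Sym2.mk_isDiag_iff]
          exact E1_ne hT hp
      · -- injective
        intro p hp q hq hpq
        induction p using Sym2.ind with
        | _ u v =>
          induction q using Sym2.ind with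
          | _ u' v' =>
            simp only [Finset.mem_filter, Finset.mem_univ, true_and, sdV] at hp hq
            simp only [Sym2.lift_mk] at hpq
            rcases Sym2.eq_iff.mp hpq with ⟨hA, hB⟩ | ⟨hA, hB⟩
            · obtain ⟨rfl, rfl⟩ := inj_aligned hT hp hq hA hB
              rfl
            · have hq' : 2 ≤ T.dist v' u' := by rw [SimpleGraph.dist_comm]; omega
              obtain ⟨rfl, rfl⟩ := inj_aligned hT hp hq' hA hB
              exact Sym2.eq_swap
      · -- surjective
        intro b hb
        induction b using Sym2.ind with
        | _ e f =>
          simp only [Finset.mem_filter, Finset.mem_univ, true_and,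
            Sym2.mk_isDiag_iff] at hb
          obtain ⟨a1, b1, hab1, hv1⟩ := edge_rep e
          obtain ⟨c1, d1, hcd1, hv2⟩ := edge_rep f
          have hef : s(a1, b1) ≠ s(c1, d1) := by
            rw [← hv1, ← hv2]
            intro hcon
            exact hb (Subtype.ext hcon)
          obtain ⟨u, v, h2, hEe, hEf⟩ := exists_pair' hT hab1 hcd1 hef
          refine ⟨s(u, v), ?_, ?_⟩
          · simp only [Finset.mem_filter, Finset.mem_univ, true_and, sdV]
            exact h2
          · have he' : E1 hT u v = e := Subtype.ext (by rw [hEe, ← hv1])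
            have hf' : E1 hT v u = f := Subtype.ext (by rw [hEf, ← hv2])
            simp only [Sym2.lift_mk, he', hf']
      · -- values agree
        intro p hp
        induction p using Sym2.ind with
        | _ u v =>
          simp only [Finset.mem_filter, Finset.mem_univ, true_and, sdV] at hp
          simp only [Sym2.lift_mk, sdE, sdV]
          have hld := lineDist hT hp
          have hcast : (T.dist u v : ℝ) = (T.lineGraph.dist (E1 hT u v) (E1 hT v u) : ℝ) + 1 := by
            exact_mod_cast hld.symm
          rw [hcast]
          ring
    · haveI : IsEmpty T.edgeSet := not_nonempty_iff.mp hE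
      haveI hSE : IsEmpty (Sym2 T.edgeSet) :=
        ⟨fun z => Sym2.ind (fun a _ => isEmptyElim a) z⟩
      rw [Finset.univ_eq_empty (α := Sym2 T.edgeSet), Finset.sum_empty]
      symm
      apply Finset.sum_eq_zero
      intro p _
      induction p using Sym2.ind with
      | _ u v =>
        have hd : T.dist u v = 0 := by
          by_contra h0
          obtain ⟨q, hq⟩ := SimpleGraph.exists_walk_of_dist_ne_zero h0
          have hnp : ¬ q.Nil := by
            rw [SimpleGraph.Walk.not_nil_iff_lt_length]
            omega
          exact (‹IsEmpty T.edgeSet›).false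
            ⟨s(u, q.getVert 1), T.mem_edgeSet.mpr (q.adj_snd hnp)⟩
        rw [sdV, hd]
        norm_num
  rw [Finset.sum_add_distrib] at key
  rw [Finset.sum_sub_distrib] at key
  rw [edgeHyperWiener, hyperWiener, wienerIndex, Nat.cast_sum]
  linarith [key]
end

section
/- Let T be a finite tree with n vertices and let L(T) be its line graph. Then W(L(T)) = W(T) − n(n−1)/2. -/
open SimpleGraph Polynomial Finset

open SimpleGraph Finset

namespace Stmt14Aux

variable {V : Type*} [DecidableEq V] {T : SimpleGraph V}

noncomputable def thePath (hT : T.IsTree) (u v : V) : T.Walk u v :=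
  (hT.existsUnique_path u v).choose

lemma thePath_isPath (hT : T.IsTree) (u v : V) : (thePath hT u v).IsPath :=
  (hT.existsUnique_path u v).choose_spec.1

lemma path_unique (hT : T.IsTree) {u v : V} (q : T.Walk u v) (hq : q.IsPath) :
    q = thePath hT u v :=
  (hT.existsUnique_path u v).unique hq (thePath_isPath hT u v)

lemma length_thePath (hT : T.IsTree) (u v : V) :
    (thePath hT u v).length = T.dist u v := by
  obtain ⟨p, hp, hl⟩ := (hT.isConnected.preconnected u v).exists_path_of_dist
  rw [path_unique hT p hp] at hl
  exact hl

noncomputable def nxt (hT : T.IsTree) (u v : V) : V := (thePath hT u v).getVert 1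

lemma adj_nxt (hT : T.IsTree) {u v : V} (h : u ≠ v) : T.Adj u (nxt hT u v) := by
  have hd : 0 < T.dist u v := hT.isConnected.pos_dist_of_ne h
  have := (thePath hT u v).adj_getVert_succ (i := 0) (by rw [length_thePath]; omega)
  rwa [Walk.getVert_zero] at this

lemma nxt_eq_of_adj_of_mem (hT : T.IsTree) {u v w : V} (h : T.Adj u w)
    (hw : w ∈ (thePath hT u v).support) : nxt hT u v = w := by
  have htu : ((thePath hT u v).takeUntil w hw).length = 1 := by
    have h1 : ((thePath hT u v).takeUntil w hw) = thePath hT u w :=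
      path_unique hT _ ((thePath_isPath hT u v).takeUntil hw)
    rw [h1, length_thePath, (dist_eq_one_iff_adj (G := T)).2 h]
  unfold nxt
  conv_lhs => rw [← (thePath hT u v).take_spec hw]
  rw [Walk.getVert_append, htu, if_neg (by omega), Nat.sub_self, Walk.getVert_zero]

lemma nxt_mem_support (hT : T.IsTree) (u v : V) :
    nxt hT u v ∈ (thePath hT u v).support := by
  rw [Walk.mem_support_iff_exists_getVert]
  rcases eq_or_ne u v with rfl | h
  · refine ⟨0, ?_, by omega⟩
    rw [Walk.getVert_zero, nxt, Walk.getVert_of_length_le]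
    rw [length_thePath, dist_self]
    omega
  · exact ⟨1, rfl, by rw [length_thePath]; exact hT.isConnected.pos_dist_of_ne h⟩

lemma dist_eq_succ (hT : T.IsTree) {u v : V} (h : u ≠ v) :
    T.dist u v = T.dist (nxt hT u v) v + 1 := by
  set p := thePath hT u v with hp
  have hw := nxt_mem_support hT u v
  have htake : p.takeUntil _ hw = thePath hT u (nxt hT u v) :=
    path_unique hT _ ((thePath_isPath hT u v).takeUntil hw)
  have hdrop : p.dropUntil _ hw = thePath hT (nxt hT u v) v :=
    path_unique hT _ ((thePath_isPath hT u v).dropUntil hw)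
  have := congrArg Walk.length (p.take_spec hw)
  rw [Walk.length_append, htake, hdrop, length_thePath, length_thePath, length_thePath,
    (dist_eq_one_iff_adj (G := T)).2 (adj_nxt hT h)] at this
  omega

lemma thePath_reverse (hT : T.IsTree) (u v : V) :
    (thePath hT u v).reverse = thePath hT v u :=
  path_unique hT _ (thePath_isPath hT u v).reverse

lemma nxt_nxt (hT : T.IsTree) {u v : V} (h2 : 2 ≤ T.dist u v) :
    nxt hT v u = nxt hT v (nxt hT u v) := by
  set w := nxt hT u v with hwdef
  have hne : u ≠ v := by
    intro h; rw [h, dist_self] at h2; omega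
  have hwv : w ≠ v := by
    intro h
    have := dist_eq_succ hT hne
    rw [← hwdef, h, dist_self] at this
    omega
  have hw : w ∈ (thePath hT v u).support := by
    rw [← thePath_reverse hT u v, Walk.support_reverse, List.mem_reverse]
    exact nxt_mem_support hT u v
  have hsub : (thePath hT v w).support ⊆ (thePath hT v u).support := by
    rw [← path_unique hT _ ((thePath_isPath hT v u).takeUntil hw)]
    exact Walk.support_takeUntil_subset _ hw
  exact nxt_eq_of_adj_of_mem hT (adj_nxt hT (Ne.symm hwv))
    (hsub (nxt_mem_support hT v w))

end Stmt14Aux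
set_option linter.unusedSectionVars false

namespace Stmt14Aux

variable {V : Type*} [DecidableEq V] {T : SimpleGraph V}

lemma dist_le_one_of_mem {e : Sym2 V} (he : e ∈ T.edgeSet) {u v : V}
    (hu : u ∈ e) (hv : v ∈ e) : T.dist u v ≤ 1 := by
  induction e using Sym2.ind with
  | _ a b =>
    rw [SimpleGraph.mem_edgeSet] at he
    rw [Sym2.mem_iff] at hu hv
    rcases hu with rfl | rfl <;> rcases hv with rfl | rfl
    · rw [SimpleGraph.dist_self]; omega
    · exact le_of_eq (SimpleGraph.dist_eq_one_iff_adj.2 he)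
    · exact le_of_eq (SimpleGraph.dist_eq_one_iff_adj.2 he.symm)
    · rw [SimpleGraph.dist_self]; omega

lemma dist_le_lwalk (hc : T.Connected) {e f : T.edgeSet}
    (w : T.lineGraph.Walk e f) : ∀ {u v : V}, u ∈ (e : Sym2 V) → v ∈ (f : Sym2 V) →
    T.dist u v ≤ w.length + 1 := by
  induction w with
  | nil => exact fun hu hv => dist_le_one_of_mem (Subtype.mem _) hu hv
  | @cons e e' f h q ih =>
    intro u v hu hv
    obtain ⟨x, hx⟩ := h.2
    calc T.dist u v ≤ T.dist u x + T.dist x v := hc.dist_triangle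
      _ ≤ 1 + (q.length + 1) :=
        Nat.add_le_add (dist_le_one_of_mem (Subtype.mem _) hu hx.1) (ih hx.2 hv)
      _ = (SimpleGraph.Walk.cons h q).length + 1 := by
        rw [SimpleGraph.Walk.length_cons]; omega

lemma exists_lwalk (hT : T.IsTree) : ∀ (k : ℕ) (u v : V)
    (he : s(u, nxt hT u v) ∈ T.edgeSet) (hf : s(nxt hT v u, v) ∈ T.edgeSet),
    T.dist u v = k + 1 →
    ∃ w : T.lineGraph.Walk ⟨s(u, nxt hT u v), he⟩ ⟨s(nxt hT v u, v), hf⟩, w.length = k := by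
  intro k
  induction k with
  | zero =>
    intro u v he hf hd
    have hne : u ≠ v := by
      intro h; rw [h, SimpleGraph.dist_self] at hd; omega
    have h1 : nxt hT u v = v := by
      unfold nxt
      rw [show (1 : ℕ) = (thePath hT u v).length by rw [length_thePath, hd],
        SimpleGraph.Walk.getVert_length]
    have h2 : nxt hT v u = u := by
      unfold nxt
      rw [show (1 : ℕ) = (thePath hT v u).length by
          rw [length_thePath, SimpleGraph.dist_comm, hd],
        SimpleGraph.Walk.getVert_length]
    have hef : (⟨s(u, nxt hT u v), he⟩ : T.edgeSet) = ⟨s(nxt hT v u, v), hf⟩ :=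
      Subtype.ext (by show s(u, nxt hT u v) = s(nxt hT v u, v); rw [h1, h2])
    exact ⟨(SimpleGraph.Walk.nil).copy rfl hef, by simp⟩
  | succ k ih =>
    intro u v he hf hd
    have hne : u ≠ v := by
      intro h; rw [h, SimpleGraph.dist_self] at hd; omega
    have hstep := dist_eq_succ hT hne
    have hd' : T.dist (nxt hT u v) v = k + 1 := by omega
    have hne' : nxt hT u v ≠ v := by
      intro h; rw [h, SimpleGraph.dist_self] at hd'; omega
    have he' : s(nxt hT u v, nxt hT (nxt hT u v) v) ∈ T.edgeSet :=
      T.mem_edgeSet.2 (adj_nxt hT hne')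
    have h2 : 2 ≤ T.dist u v := by omega
    have hf' : s(nxt hT v (nxt hT u v), v) ∈ T.edgeSet := by
      rw [← nxt_nxt hT h2]; exact hf
    obtain ⟨w', hw'⟩ := ih (nxt hT u v) v he' hf' hd'
    have huu'' : u ≠ nxt hT (nxt hT u v) v := by
      intro h
      have hstep' := dist_eq_succ hT hne'
      rw [← h] at hstep'
      omega
    have hadj : T.lineGraph.Adj ⟨s(u, nxt hT u v), he⟩
        ⟨s(nxt hT u v, nxt hT (nxt hT u v) v), he'⟩ := by
      rw [SimpleGraph.lineGraph_adj_iff_exists]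
      refine ⟨?_, nxt hT u v, by simp, by simp⟩
      intro h
      simp only [Subtype.mk.injEq, Sym2.eq_iff] at h
      rcases h with ⟨h0, h⟩ | ⟨h, h'⟩
      · exact (adj_nxt hT hne).ne h0
      · exact huu'' h
    have hfeq : (⟨s(nxt hT v (nxt hT u v), v), hf'⟩ : T.edgeSet) = ⟨s(nxt hT v u, v), hf⟩ :=
      Subtype.ext (by
        show s(nxt hT v (nxt hT u v), v) = s(nxt hT v u, v)
        rw [← nxt_nxt hT h2])
    exact ⟨SimpleGraph.Walk.cons hadj (w'.copy rfl hfeq), by simp [hw']⟩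

lemma lg_dist (hT : T.IsTree) {u v : V} (h2 : 2 ≤ T.dist u v)
    (he : s(u, nxt hT u v) ∈ T.edgeSet) (hf : s(nxt hT v u, v) ∈ T.edgeSet) :
    T.lineGraph.dist ⟨s(u, nxt hT u v), he⟩ ⟨s(nxt hT v u, v), hf⟩ + 1 = T.dist u v := by
  obtain ⟨k, hk⟩ : ∃ k, T.dist u v = k + 1 := ⟨T.dist u v - 1, by omega⟩
  obtain ⟨w, hw⟩ := exists_lwalk hT k u v he hf hk
  have hle : T.lineGraph.dist _ _ ≤ k := hw ▸ SimpleGraph.dist_le w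
  have hreach : T.lineGraph.Reachable ⟨s(u, nxt hT u v), he⟩ ⟨s(nxt hT v u, v), hf⟩ := ⟨w⟩
  obtain ⟨w0, hw0⟩ := hreach.exists_walk_length_eq_dist
  have := dist_le_lwalk hT.isConnected w0 (Sym2.mem_mk_left u _) (Sym2.mem_mk_right _ v)
  rw [hw0] at this
  omega

end Stmt14Aux
set_option linter.unusedSectionVars false
namespace Stmt14Aux
open SimpleGraph

variable {V : Type*} [DecidableEq V] {T : SimpleGraph V}

lemma dichotomy (hT : T.IsTree) {a b : V} (hab : T.Adj a b) (t : V) :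
    b ∈ (thePath hT a t).support ∨ a ∈ (thePath hT b t).support := by
  by_contra h
  push_neg at h
  obtain ⟨h1, h2⟩ := h
  have hp : (SimpleGraph.Walk.cons hab (thePath hT b t)).IsPath :=
    (thePath_isPath hT b t).cons h2
  apply h1
  rw [← path_unique hT _ hp]
  rw [SimpleGraph.Walk.support_cons]
  exact List.mem_cons_of_mem _ (SimpleGraph.Walk.start_mem_support _)

lemma key (hT : T.IsTree) {u b c d : V} (hub : T.Adj u b) (hcd : T.Adj c d)
    (hmem : b ∈ (thePath hT u c).support) (hne : s(u, b) ≠ s(c, d)) :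
    ∃ p q : V, 2 ≤ T.dist p q ∧ s(p, nxt hT p q) = s(u, b) ∧ s(nxt hT q p, q) = s(c, d) := by
  -- choose the far endpoint of the edge {c, d} as seen from u
  have main : ∀ v v' : V, T.Adj v v' → s(v', v) = s(c, d) →
      v' ∈ (thePath hT v u).support → b ∈ (thePath hT u v).support →
      ∃ p q : V, 2 ≤ T.dist p q ∧ s(p, nxt hT p q) = s(u, b) ∧
        s(nxt hT q p, q) = s(c, d) := by
    intro v v' hvv' hsf hv'mem hbmem
    have hnb : nxt hT u v = b := nxt_eq_of_adj_of_mem hT hub hbmem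
    have hnv : nxt hT v u = v' := nxt_eq_of_adj_of_mem hT hvv' hv'mem
    have huv : u ≠ v := by
      rintro rfl
      rw [SimpleGraph.Walk.mem_support_iff_exists_getVert] at hbmem
      obtain ⟨i, hib, hi⟩ := hbmem
      rw [length_thePath, SimpleGraph.dist_self] at hi
      have : i = 0 := by omega
      subst this
      rw [SimpleGraph.Walk.getVert_zero] at hib
      exact hub.ne' hib.symm
    have hd1 : T.dist u v ≠ 1 := by
      intro h1
      have e1 : nxt hT u v = v := by
        unfold nxt
        rw [show (1 : ℕ) = (thePath hT u v).length by rw [length_thePath, h1],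
          SimpleGraph.Walk.getVert_length]
      have e2 : nxt hT v u = u := by
        unfold nxt
        rw [show (1 : ℕ) = (thePath hT v u).length by
            rw [length_thePath, SimpleGraph.dist_comm, h1],
          SimpleGraph.Walk.getVert_length]
      apply hne
      rw [← hsf, ← hnv, e2, ← hnb, e1]
    have h2 : 2 ≤ T.dist u v := by
      have := hT.isConnected.pos_dist_of_ne huv
      omega
    exact ⟨u, v, h2, by rw [hnb], by rw [hnv, hsf]⟩
  rcases dichotomy hT hcd.symm u with hmem2 | hmem2
  · -- c ∈ supp (thePath d u): v := d, v' := c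
    refine main d c hcd.symm rfl hmem2 ?_
    -- b ∈ supp (thePath u d): since c ∈ supp (thePath u d)
    have hcm : c ∈ (thePath hT u d).support := by
      rw [← thePath_reverse hT d u, SimpleGraph.Walk.support_reverse, List.mem_reverse]
      exact hmem2
    have : (thePath hT u c).support ⊆ (thePath hT u d).support := by
      rw [← path_unique hT _ ((thePath_isPath hT u d).takeUntil hcm)]
      exact SimpleGraph.Walk.support_takeUntil_subset _ hcm
    exact this hmem
  · -- d ∈ supp (thePath c u): v := c, v' := d
    exact main c d hcd Sym2.eq_swap hmem2 hmem

end Stmt14Aux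
set_option linter.unusedSectionVars false
set_option maxHeartbeats 1000000
namespace Stmt14Aux
open SimpleGraph Finset

lemma sum_pairs {α : Type*} [Fintype α] [DecidableEq α] (f : Sym2 α → ℕ)
    (hf : ∀ a, f s(a, a) = 0) :
    ∑ uv : α × α, f (Sym2.mk.uncurry uv) = 2 * ∑ p : Sym2 α, f p := by
  rw [Finset.mul_sum]
  rw [← Finset.sum_fiberwise_of_maps_to (g := Sym2.mk.uncurry)
    (fun i (_ : i ∈ Finset.univ) => Finset.mem_univ (Sym2.mk.uncurry i))
    (fun uv => f (Sym2.mk.uncurry uv))]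
  refine Finset.sum_congr rfl fun p _ => ?_
  induction p using Sym2.ind with
  | _ a b =>
    have hconst : ∑ uv ∈ Finset.univ.filter (fun uv : α × α => Sym2.mk.uncurry uv = s(a, b)),
        f (Sym2.mk.uncurry uv)
        = (Finset.univ.filter (fun uv : α × α => Sym2.mk.uncurry uv = s(a, b))).card * f s(a, b) := by
      rw [Finset.sum_congr rfl (fun uv huv => by rw [(Finset.mem_filter.1 huv).2])]
      rw [Finset.sum_const, smul_eq_mul]
    rw [hconst]
    rcases eq_or_ne a b with rfl | hab
    · rw [hf a, Nat.mul_zero, Nat.mul_zero]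
    · have hfil : Finset.univ.filter (fun uv : α × α => Sym2.mk.uncurry uv = s(a, b))
          = {(a, b), (b, a)} := by
        ext ⟨x, y⟩
        simp only [Finset.mem_filter, Finset.mem_univ, true_and, Finset.mem_insert, Function.uncurry_apply_pair,
          Finset.mem_singleton, Prod.mk.injEq]
        exact Sym2.eq_iff
      rw [hfil, Finset.card_insert_of_notMem (by simp [Prod.ext_iff, hab]),
        Finset.card_singleton]

variable {V : Type*} [Fintype V] [DecidableEq V] {T : SimpleGraph V} [DecidableRel T.Adj]

lemma count_eq (hT : T.IsTree) :
    (∑ uv : V × V, T.dist uv.1 uv.2) =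
      (∑ ef : T.edgeSet × T.edgeSet, T.lineGraph.dist ef.1 ef.2)
        + Fintype.card V * (Fintype.card V - 1) := by
  classical
  set A : Finset (V × V) := Finset.univ.filter (fun uv : V × V => uv.1 ≠ uv.2) with hAdef
  have hA : ∑ uv : V × V, T.dist uv.1 uv.2 = ∑ uv ∈ A, T.dist uv.1 uv.2 := by
    rw [hAdef, Finset.sum_filter_of_ne]
    intro uv _ hd
    exact (SimpleGraph.dist_ne_zero_iff_ne_and_reachable.1 hd).1
  have hcard : A.card = Fintype.card V * (Fintype.card V - 1) := by
    have h1 : A = Finset.univ.offDiag := by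
      ext uv; simp [hAdef, Finset.mem_offDiag]
    rw [h1, Finset.offDiag_card, Finset.card_univ, Nat.mul_sub, mul_one]
  have hpos : ∀ uv ∈ A, 1 ≤ T.dist uv.1 uv.2 := by
    intro uv huv
    have hne : uv.1 ≠ uv.2 := (Finset.mem_filter.1 huv).2
    exact hT.isConnected.pos_dist_of_ne hne
  have hsplit : ∑ uv ∈ A, T.dist uv.1 uv.2
      = (∑ uv ∈ A, (T.dist uv.1 uv.2 - 1)) + A.card := by
    have : ∀ uv ∈ A, T.dist uv.1 uv.2 = (T.dist uv.1 uv.2 - 1) + 1 := by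
      intro uv huv; have := hpos uv huv; omega
    rw [Finset.sum_congr rfl this, Finset.sum_add_distrib, Finset.sum_const, smul_eq_mul,
      mul_one]
  set B : Finset (V × V) := A.filter (fun uv => 2 ≤ T.dist uv.1 uv.2) with hBdef
  have hB : ∑ uv ∈ A, (T.dist uv.1 uv.2 - 1) = ∑ uv ∈ B, (T.dist uv.1 uv.2 - 1) := by
    rw [hBdef]
    refine (Finset.sum_filter_of_ne ?_).symm
    intro uv huv hd
    have := hpos uv huv
    omega
  set C : Finset (T.edgeSet × T.edgeSet) :=
    Finset.univ.filter (fun ef : T.edgeSet × T.edgeSet => ef.1 ≠ ef.2) with hCdef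
  have hC : ∑ ef : T.edgeSet × T.edgeSet, T.lineGraph.dist ef.1 ef.2
      = ∑ ef ∈ C, T.lineGraph.dist ef.1 ef.2 := by
    rw [hCdef, Finset.sum_filter_of_ne]
    intro ef _ hd h
    rw [h, SimpleGraph.dist_self] at hd
    exact hd rfl
  have hBd : ∀ uv : V × V, uv ∈ B → 2 ≤ T.dist uv.1 uv.2 := fun uv huv =>
    (Finset.mem_filter.1 huv).2
  have hBne : ∀ uv : V × V, uv ∈ B → uv.1 ≠ uv.2 := by
    intro uv huv h
    have := hBd uv huv
    rw [h, SimpleGraph.dist_self] at this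
    omega
  have hbij : ∑ uv ∈ B, (T.dist uv.1 uv.2 - 1) = ∑ ef ∈ C, T.lineGraph.dist ef.1 ef.2 := by
    refine Finset.sum_bij
      (fun uv huv =>
        (⟨s(uv.1, nxt hT uv.1 uv.2), T.mem_edgeSet.2 (adj_nxt hT (hBne uv huv))⟩,
         ⟨s(nxt hT uv.2 uv.1, uv.2),
           T.mem_edgeSet.2 ((adj_nxt hT (Ne.symm (hBne uv huv))).symm)⟩))
      ?_ ?_ ?_ ?_
    · -- maps into C
      rintro ⟨u, v⟩ huv
      rw [hCdef, Finset.mem_filter]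
      refine ⟨Finset.mem_univ _, ?_⟩
      intro h
      have h' : s(u, nxt hT u v) = s(nxt hT v u, v) := congrArg Subtype.val h
      rw [Sym2.eq_iff] at h'
      have h2 : 2 ≤ T.dist u v := hBd (u, v) huv
      have hne : u ≠ v := hBne (u, v) huv
      rcases h' with ⟨h1, h2'⟩ | ⟨h1, h2'⟩
      · have hs := dist_eq_succ hT hne
        rw [h2', SimpleGraph.dist_self] at hs
        omega
      · exact hne h1
    · -- injective
      rintro ⟨u, v⟩ huv ⟨u', v'⟩ huv' heq
      have h2 : 2 ≤ T.dist u v := hBd (u, v) huv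
      have h2' : 2 ≤ T.dist u' v' := hBd (u', v') huv'
      have hne : u ≠ v := hBne (u, v) huv
      have hne' : u' ≠ v' := hBne (u', v') huv'
      rw [Prod.ext_iff] at heq
      obtain ⟨hE, hF⟩ := heq
      have hEv : s(u, nxt hT u v) = s(u', nxt hT u' v') := congrArg Subtype.val hE
      have hFv : s(nxt hT v u, v) = s(nxt hT v' u', v') := congrArg Subtype.val hF
      have l1 := lg_dist hT h2 (T.mem_edgeSet.2 (adj_nxt hT (hBne (u, v) huv)))
        (T.mem_edgeSet.2 ((adj_nxt hT (Ne.symm (hBne (u, v) huv))).symm))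
      have l2 := lg_dist hT h2' (T.mem_edgeSet.2 (adj_nxt hT (hBne (u', v') huv')))
        (T.mem_edgeSet.2 ((adj_nxt hT (Ne.symm (hBne (u', v') huv'))).symm))
      have eeq : (⟨s(u, nxt hT u v), T.mem_edgeSet.2 (adj_nxt hT (hBne (u, v) huv))⟩ :
          T.edgeSet) = ⟨s(u', nxt hT u' v'), T.mem_edgeSet.2 (adj_nxt hT (hBne (u', v') huv'))⟩ :=
        Subtype.ext hEv
      have feq : (⟨s(nxt hT v u, v), T.mem_edgeSet.2
            ((adj_nxt hT (Ne.symm (hBne (u, v) huv))).symm)⟩ : T.edgeSet)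
          = ⟨s(nxt hT v' u', v'), T.mem_edgeSet.2
            ((adj_nxt hT (Ne.symm (hBne (u', v') huv'))).symm)⟩ :=
        Subtype.ext hFv
      have hdeq : T.dist u v = T.dist u' v' := by
        rw [← l1, ← l2, eeq, feq]
      have s1 : T.dist u v = T.dist (nxt hT u v) v + 1 := dist_eq_succ hT hne
      have s1' : T.dist u' v' = T.dist (nxt hT u' v') v' + 1 := dist_eq_succ hT hne'
      have s2 : T.dist u v = T.dist u (nxt hT v u) + 1 := by
        calc T.dist u v = T.dist v u := SimpleGraph.dist_comm
          _ = T.dist (nxt hT v u) u + 1 := dist_eq_succ hT (Ne.symm hne)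
          _ = T.dist u (nxt hT v u) + 1 := by rw [SimpleGraph.dist_comm]
      have s2' : T.dist u' v' = T.dist u' (nxt hT v' u') + 1 := by
        calc T.dist u' v' = T.dist v' u' := SimpleGraph.dist_comm
          _ = T.dist (nxt hT v' u') u' + 1 := dist_eq_succ hT (Ne.symm hne')
          _ = T.dist u' (nxt hT v' u') + 1 := by rw [SimpleGraph.dist_comm]
      rw [Sym2.eq_iff] at hEv hFv
      rcases hEv with ⟨e1, e2⟩ | ⟨e1, e2⟩
      · rcases hFv with ⟨f1, f2⟩ | ⟨f1, f2⟩
        · exact Prod.ext e1 f2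
        · exfalso
          have c1 : T.dist u v = T.dist u' (nxt hT v' u') := by rw [e1, f2]
          omega
      · rcases hFv with ⟨f1, f2⟩ | ⟨f1, f2⟩
        · exfalso
          have c1 : T.dist u v = T.dist (nxt hT u' v') v' := by rw [e1, f2]
          omega
        · exfalso
          have hne'' : nxt hT u' v' ≠ v' := by
            intro h
            rw [h, SimpleGraph.dist_self] at s1'
            omega
          have hw : nxt hT v' u' = nxt hT v' (nxt hT u' v') := nxt_nxt hT h2'
          have s3 : T.dist v' (nxt hT u' v')
              = T.dist (nxt hT v' (nxt hT u' v')) (nxt hT u' v') + 1 :=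
            dist_eq_succ hT (Ne.symm hne'')
          have c0 : T.dist v' (nxt hT u' v') = T.dist (nxt hT u' v') v' :=
            SimpleGraph.dist_comm
          have c1 : T.dist u v
              = T.dist (nxt hT u' v') (nxt hT v' (nxt hT u' v')) := by
            rw [e1, f2, hw]
          have c2 : T.dist (nxt hT u' v') (nxt hT v' (nxt hT u' v'))
              = T.dist (nxt hT v' (nxt hT u' v')) (nxt hT u' v') :=
            SimpleGraph.dist_comm
          omega
    · -- surjective
      rintro ⟨⟨e, he⟩, ⟨f, hf⟩⟩ hef
      rw [hCdef, Finset.mem_filter] at hef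
      have hnef : e ≠ f := by
        intro h
        exact hef.2 (Subtype.ext h)
      clear hef
      induction e using Sym2.ind with
      | _ a b =>
      induction f using Sym2.ind with
      | _ c d =>
        have hab : T.Adj a b := T.mem_edgeSet.1 he
        have hcd : T.Adj c d := T.mem_edgeSet.1 hf
        have hkey : ∃ p q : V, 2 ≤ T.dist p q ∧ s(p, nxt hT p q) = s(a, b) ∧
            s(nxt hT q p, q) = s(c, d) := by
          rcases dichotomy hT hab c with h | h
          · exact key hT hab hcd h hnef
          · obtain ⟨p, q, h1, h2, h3⟩ := key hT hab.symm hcd h (Sym2.eq_swap.trans_ne hnef)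
            exact ⟨p, q, h1, h2.trans Sym2.eq_swap, h3⟩
        obtain ⟨p, q, h1, h2, h3⟩ := hkey
        have hpq : p ≠ q := by
          intro h
          rw [h, SimpleGraph.dist_self] at h1
          omega
        refine ⟨(p, q), Finset.mem_filter.2 ⟨Finset.mem_filter.2
          ⟨Finset.mem_univ _, hpq⟩, h1⟩, ?_⟩
        exact Prod.ext (Subtype.ext h2) (Subtype.ext h3)
    · -- values
      rintro ⟨u, v⟩ huv
      have h2 : 2 ≤ T.dist u v := hBd (u, v) huv
      have := lg_dist hT h2 (T.mem_edgeSet.2 (adj_nxt hT (hBne (u, v) huv)))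
        (T.mem_edgeSet.2 ((adj_nxt hT (Ne.symm (hBne (u, v) huv))).symm))
      show T.dist u v - 1 = T.lineGraph.dist
        ⟨s(u, nxt hT u v), T.mem_edgeSet.2 (adj_nxt hT (hBne (u, v) huv))⟩
        ⟨s(nxt hT v u, v), T.mem_edgeSet.2 ((adj_nxt hT (Ne.symm (hBne (u, v) huv))).symm)⟩
      omega
  rw [hA, hsplit, hB, hbij, hC, hcard]

end Stmt14Aux

/-- For a finite tree `T` on `n` vertices,
`W(L(T)) = W(T) - n(n-1)/2`. -/
theorem stmt14 {V : Type*} [Fintype V] [DecidableEq V] (T : SimpleGraph V)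
    [DecidableRel T.Adj] (hT : T.IsTree) :
    (wienerIndex T.lineGraph : ℝ) =
      (wienerIndex T : ℝ) - (Fintype.card V : ℝ) * (Fintype.card V - 1) / 2 := by
  classical
  have hn : 1 ≤ Fintype.card V := by
    have : Nonempty V := hT.isConnected.nonempty
    exact Fintype.card_pos
  have hw : 2 * wienerIndex T = ∑ uv : V × V, T.dist uv.1 uv.2 := by
    rw [wienerIndex, ← Stmt14Aux.sum_pairs (f := sdist T) (fun a => by simp [sdist])]
    exact Finset.sum_congr rfl fun uv _ => by rcases uv with ⟨u, v⟩; simp [sdist]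
  have hwl : 2 * wienerIndex T.lineGraph
      = ∑ ef : T.edgeSet × T.edgeSet, T.lineGraph.dist ef.1 ef.2 := by
    rw [wienerIndex, ← Stmt14Aux.sum_pairs (f := sdist T.lineGraph)
      (fun a => by simp [sdist])]
    exact Finset.sum_congr rfl fun ef _ => by rcases ef with ⟨e, f⟩; simp [sdist]
  have hkey : 2 * wienerIndex T
      = 2 * wienerIndex T.lineGraph + Fintype.card V * (Fintype.card V - 1) := by
    rw [hw, hwl, Stmt14Aux.count_eq hT]
  have hcast := congrArg (fun m : ℕ => (m : ℝ)) hkey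
  push_cast [Nat.cast_sub hn] at hcast
  linarith
end

section
/- Let T be a finite tree. For the map F from vertex pairs at distance k (k≥1) to edge pairs at distance k−1 defined by F({x,y}) = {e_x, e_y} (the first edges of the x–y path at each end), F is injective: if F({x,y}) = F({a,b}) then {x,y} = {a,b}. -/
open SimpleGraph Polynomial Finset

private lemma key {V : Type*} {T : SimpleGraph V} (hT : T.IsTree) {x x' y y' : V} {k : ℕ}
    (hk : 2 ≤ k) (hx : T.Adj x x') (hy : T.Adj y y')
    (hxy : T.dist x y = k) (hx' : T.dist x' y = k - 1) (hy' : T.dist y' x = k - 1) :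
    T.dist x' y' < k := by
  classical
  obtain ⟨Q, hQp, hQl⟩ := hT.isConnected.exists_path_of_dist x' y
  obtain ⟨R, hRp, hRl⟩ := hT.isConnected.exists_path_of_dist y' x
  have hxQ : x ∉ Q.support := by
    intro hmem
    have h1 := T.dist_le (Q.dropUntil x hmem)
    have h2 := Q.length_dropUntil_le hmem
    omega
  have hyR : y ∉ R.support := by
    intro hmem
    have h1 := T.dist_le (R.dropUntil y hmem)
    have h2 := R.length_dropUntil_le hmem
    rw [SimpleGraph.dist_comm] at h1
    omega
  have hP1 : (Walk.cons hx Q).IsPath := hQp.cons hxQ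
  have hP2 : ((Walk.cons hy R).reverse).IsPath := (hRp.cons hyR).reverse
  have heq : Walk.cons hx Q = (Walk.cons hy R).reverse :=
    ((hT.existsUnique_path x y).unique hP1 hP2 :)
  have hy'mem : y' ∈ (Walk.cons hx Q).support := by
    rw [heq, Walk.support_reverse, List.mem_reverse, Walk.support_cons]
    exact List.mem_cons_of_mem _ R.start_mem_support
  rw [Walk.support_cons, List.mem_cons] at hy'mem
  have hy'x : y' ≠ x := by
    intro hh
    rw [hh, SimpleGraph.dist_self] at hy'
    omega
  have hy'Q : y' ∈ Q.support := hy'mem.resolve_left hy'x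
  have h1 := T.dist_le (Q.takeUntil y' hy'Q)
  have h2 := Q.length_takeUntil_le hy'Q
  omega

private lemma half {V : Type*} {T : SimpleGraph V} (hT : T.IsTree)
    {k : ℕ} (hk : 1 ≤ k) {x y a b x' y' a' b' : V}
    (hxy : T.dist x y = k) (hab : T.dist a b = k)
    (hx : T.Adj x x') (hx' : T.dist x' y = k - 1)
    (hy : T.Adj y y') (hy' : T.dist y' x = k - 1)
    (ha : T.Adj a a') (ha' : T.dist a' b = k - 1)
    (hb : T.Adj b b') (hb' : T.dist b' a = k - 1)
    (h1 : s(x, x') = s(a, a')) (h2 : s(y, y') = s(b, b')) :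
    s(x, y) = s(a, b) := by
  rw [Sym2.eq_iff] at h1 h2
  rcases h1 with ⟨rfl, rfl⟩ | ⟨rfl, rfl⟩
  · rcases h2 with ⟨rfl, rfl⟩ | ⟨rfl, rfl⟩
    · rfl
    · -- b = y', so dist x y' = k, but dist y' x = k - 1
      rw [SimpleGraph.dist_comm] at hab
      omega
  · rcases h2 with ⟨rfl, rfl⟩ | ⟨rfl, rfl⟩
    · -- a' = x, b = y : dist x y = k - 1
      omega
    · -- a = x', b = y', a' = x, b' = y
      rcases eq_or_lt_of_le hk with hk1 | hk2
      · -- k = 1 : x' = y, y' = x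
        have hx'y : x' = y := by
          have : T.dist x' y = 0 := by omega
          exact (hT.isConnected.dist_eq_zero_iff).mp this
        have hy'x : y' = x := by
          have : T.dist y' x = 0 := by omega
          exact (hT.isConnected.dist_eq_zero_iff).mp this
        rw [hx'y, hy'x]
        exact Sym2.eq_swap
      · have := key hT hk2 hx hy hxy hx' hy'
        omega


/-- Injectivity of the map `F({x,y}) = {e_x, e_y}` sending a pair of
vertices at distance `k ≥ 1` to the pair of end edges of the path between them:
equal images force equal vertex pairs. -/
theorem stmt18 {V : Type*} (T : SimpleGraph V) (hT : T.IsTree)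
    (k : ℕ) (hk : 1 ≤ k) (x y a b x' y' a' b' : V)
    (hxy : T.dist x y = k) (hab : T.dist a b = k)
    (hx : T.Adj x x') (hx' : T.dist x' y = k - 1)
    (hy : T.Adj y y') (hy' : T.dist y' x = k - 1)
    (ha : T.Adj a a') (ha' : T.dist a' b = k - 1)
    (hb : T.Adj b b') (hb' : T.dist b' a = k - 1)
    (h : s(s(x, x'), s(y, y')) = s(s(a, a'), s(b, b'))) :
    s(x, y) = s(a, b) := by
  rw [Sym2.eq_iff] at h
  rcases h with ⟨h1, h2⟩ | ⟨h1, h2⟩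
  · exact half hT hk hxy hab hx hx' hy hy' ha ha' hb hb' h1 h2
  · have : s(x, y) = s(b, a) := by
      refine half hT hk hxy ?_ hx hx' hy hy' hb hb' ha ha' h1 h2
      rw [SimpleGraph.dist_comm]; exact hab
    rw [this]; exact Sym2.eq_swap
end

section
/- Let T be a finite tree and k ≥ 1. For every unordered pair {e,f} of edges of T at edge-distance k−1, there exist endpoints x of e and y of f with d(x,y) = k, and for this pair F({x,y}) = {e,f}; hence the map F from vertex pairs at distance k to edge pairs at distance k−1 is surjective. -/
open SimpleGraph Polynomial Finset

namespace SimpleGraph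

variable {V : Type*} {T : SimpleGraph V}

private lemma line_reach : ∀ {u v : V} (p : T.Walk u v) (e f : T.edgeSet),
    u ∈ (e : Sym2 V) → v ∈ (f : Sym2 V) → T.lineGraph.Reachable e f := by
  intro u v p
  induction p with
  | nil =>
    intro e f hu hv
    by_cases h : e = f
    · exact h ▸ Reachable.refl e
    · exact Adj.reachable (lineGraph_adj_iff_exists.mpr ⟨h, _, hu, hv⟩)
  | @cons a b c h q ih =>
    intro e f hu hv
    have he1 : s(a, b) ∈ T.edgeSet := h
    have h1 : T.lineGraph.Reachable e ⟨s(a, b), he1⟩ := by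
      by_cases hef : e = ⟨s(a, b), he1⟩
      · exact hef ▸ Reachable.refl e
      · exact Adj.reachable (lineGraph_adj_iff_exists.mpr ⟨hef, a, hu, Sym2.mem_mk_left a b⟩)
    exact h1.trans (ih ⟨s(a, b), he1⟩ f (Sym2.mem_mk_right a b) hv)

private lemma line_conn (hT : T.IsTree) (hne : Nonempty T.edgeSet) :
    T.lineGraph.Connected := by
  rw [connected_iff]
  refine ⟨fun e f => ?_, hne⟩
  obtain ⟨p⟩ := hT.isConnected ((e : Sym2 V).out.1) ((f : Sym2 V).out.1)
  exact line_reach p e f (Sym2.out_fst_mem _) (Sym2.out_fst_mem _)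

private lemma line_dist_le (hL : T.lineGraph.Connected) :
    ∀ {u v : V} (p : T.Walk u v) (e f : T.edgeSet),
    u ∈ (e : Sym2 V) → v ∈ (f : Sym2 V) → T.lineGraph.dist e f ≤ p.length + 1 := by
  intro u v p
  induction p with
  | nil =>
    intro e f hu hv
    by_cases h : e = f
    · simp [h, dist_self]
    · have hadj : T.lineGraph.Adj e f := lineGraph_adj_iff_exists.mpr ⟨h, _, hu, hv⟩
      simp [dist_eq_one_iff_adj.mpr hadj]
  | @cons a b c h q ih =>
    intro e f hu hv
    have he1 : s(a, b) ∈ T.edgeSet := h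
    have h2 := ih ⟨s(a, b), he1⟩ f (Sym2.mem_mk_right a b) hv
    have h1 : T.lineGraph.dist e ⟨s(a, b), he1⟩ ≤ 1 := by
      by_cases hef : e = ⟨s(a, b), he1⟩
      · simp [hef, dist_self]
      · exact le_of_eq (dist_eq_one_iff_adj.mpr
          (lineGraph_adj_iff_exists.mpr ⟨hef, a, hu, Sym2.mem_mk_left a b⟩))
    calc T.lineGraph.dist e f ≤ _ + _ := hL.dist_triangle
    _ ≤ 1 + (q.length + 1) := Nat.add_le_add h1 h2
    _ = (Walk.cons h q).length + 1 := by rw [Walk.length_cons]; ring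

private lemma tree_dist_succ_aux (hT : T.IsTree) {a b : V} (h : T.Adj a b) (x : V)
    (hle : T.dist x a ≤ T.dist x b) : T.dist x b = T.dist x a + 1 := by
  classical
  have hC := hT.isConnected
  have hub : T.dist x b ≤ T.dist x a + 1 := by
    have htri := hC.dist_triangle (u := x) (v := a) (w := b)
    rwa [dist_eq_one_iff_adj.mpr h] at htri
  have hne : T.dist x a ≠ T.dist x b := by
    intro heq
    rcases Nat.eq_zero_or_pos (T.dist x a) with h0 | hpos
    · have hxa : x = a := (hC.dist_eq_zero_iff).mp h0
      have hxb : x = b := (hC.dist_eq_zero_iff).mp (by omega)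
      exact h.ne (hxa ▸ hxb ▸ rfl)
    · obtain ⟨p, hp, hpl⟩ := hC.exists_path_of_dist x a
      obtain ⟨q, hq, hql⟩ := hC.exists_path_of_dist x b
      have hbp : b ∉ p.support := by
        intro hb
        have h1 : (p.takeUntil b hb).length + (p.dropUntil b hb).length = p.length := by
          have h4 := congrArg Walk.length (p.take_spec hb)
          rwa [Walk.length_append] at h4
        have h2 : (p.dropUntil b hb).length ≠ 0 := by
          intro h0
          exact h.ne.symm (Walk.eq_of_length_eq_zero h0)
        have h3 : T.dist x b ≤ (p.takeUntil b hb).length := dist_le _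
        omega
      have hW : (p.concat h).IsPath := by
        rw [← Walk.isPath_reverse_iff, Walk.reverse_concat]
        exact (hp.reverse).cons (by simpa using hbp)
      have hEq := (hT.existsUnique_path x b).unique hW hq
      have hlen := congrArg Walk.length hEq
      rw [Walk.length_concat] at hlen
      omega
  omega

private lemma tree_dist_succ (hT : T.IsTree) {a b : V} (h : T.Adj a b) (x : V) :
    T.dist x b = T.dist x a + 1 ∨ T.dist x a = T.dist x b + 1 := by
  rcases le_total (T.dist x a) (T.dist x b) with hle | hle
  · exact Or.inl (tree_dist_succ_aux hT h x hle)
  · exact Or.inr (tree_dist_succ_aux hT h.symm x hle)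

private lemma tree_quad (hT : T.IsTree) {x x' t u : V} {n : ℕ} (hn : 1 ≤ n)
    (hxx' : T.Adj x' x) (hut : T.Adj u t) (hxt : T.dist x t = n) (hx'u : T.dist x' u = n)
    (hxu : T.dist x u = n + 1) (hx't : T.dist x' t = n + 1) : False := by
  classical
  have hC := hT.isConnected
  obtain ⟨q, hq, hql⟩ := hC.exists_path_of_dist x t
  obtain ⟨r, hr, hrl⟩ := hC.exists_path_of_dist x' u
  rw [hxt] at hql
  rw [hx'u] at hrl
  have hW1 : (Walk.cons hxx' q).IsPath := by
    apply Walk.isPath_of_length_eq_dist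
    rw [Walk.length_cons, hql, hx't]
  have hW2 : (r.concat hut).IsPath := by
    apply Walk.isPath_of_length_eq_dist
    rw [Walk.length_concat, hrl, hx't]
  have hEq := (hT.existsUnique_path x' t).unique hW1 hW2
  have hg := congrArg (fun w => Walk.getVert w 1) hEq
  rw [Walk.getVert_cons_succ, Walk.getVert_zero, Walk.concat_eq_append, Walk.getVert_append, hrl] at hg
  by_cases h1 : 1 < n
  · rw [if_pos h1] at hg
    have hmem : x ∈ r.support :=
      Walk.mem_support_iff_exists_getVert.mpr ⟨1, hg.symm, by omega⟩
    have h2 : T.dist x u ≤ (r.dropUntil x hmem).length := dist_le _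
    have h3 := Walk.length_dropUntil_le r hmem
    omega
  · have hn1 : n = 1 := by omega
    rw [if_neg (by omega)] at hg
    have hxu' : x = u := by
      rw [hn1] at hg
      simpa using hg
    rw [hxu', dist_self] at hxu
    omega

private lemma key (hT : T.IsTree) : ∀ (n : ℕ) (e f : T.edgeSet),
    T.lineGraph.dist e f = n →
    ∃ x x' y y' : V, T.Adj x x' ∧ T.Adj y y' ∧ s(x, x') = (e : Sym2 V) ∧
      s(y, y') = (f : Sym2 V) ∧ T.dist x y = n + 1 ∧ T.dist x' y = n ∧ T.dist y' x = n := by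
  intro n
  induction n with
  | zero =>
    intro e f hd
    have hL := line_conn hT ⟨e⟩
    have hef : e = f := (hL.dist_eq_zero_iff).mp hd
    subst hef
    obtain ⟨b, hb⟩ := Sym2.mem_iff_exists.mp (Sym2.out_fst_mem (e : Sym2 V))
    have hadj : T.Adj ((e : Sym2 V).out.1) b := T.mem_edgeSet.mp (hb ▸ e.2)
    exact ⟨_, b, b, _, hadj, hadj.symm, hb.symm, by rw [Sym2.eq_swap]; exact hb.symm,
      dist_eq_one_iff_adj.mpr hadj, dist_self, dist_self⟩
  | succ n ih =>
    intro e f hd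
    have hC := hT.isConnected
    have hL := line_conn hT ⟨e⟩
    have hef : e ≠ f := by
      intro h
      rw [h, (hL.dist_eq_zero_iff (u := f) (v := f)).mpr rfl] at hd
      omega
    obtain ⟨p, hpl⟩ := hL.exists_walk_length_eq_dist e f
    obtain ⟨g, hfg, q, hq⟩ := Walk.exists_eq_cons_of_ne (Ne.symm hef) p.reverse
    have hql : q.length = n := by
      have h4 := congrArg Walk.length hq
      rw [Walk.length_reverse, hpl, hd, Walk.length_cons] at h4
      omega
    have hge : T.lineGraph.dist e g ≤ n := by
      rw [dist_comm]
      exact hql ▸ dist_le q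
    have heg : T.lineGraph.dist e g = n := by
      have htri := hL.dist_triangle (u := e) (v := g) (w := f)
      rw [hd, dist_eq_one_iff_adj.mpr hfg.symm] at htri
      omega
    obtain ⟨x, x', u, u', hxx', huu', hex, hgu, hxu, hx'u, hu'x⟩ := ih e g heg
    obtain ⟨hfgne, c, hcf, hcg⟩ := lineGraph_adj_iff_exists.mp hfg
    rw [← hgu] at hcg
    obtain ⟨z, hz⟩ := Sym2.mem_iff_exists.mp hcf
    have hcz : T.Adj c z := T.mem_edgeSet.mp (hz ▸ f.2)
    rcases Sym2.mem_iff.mp hcg with hcu | hcu'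
    · -- f is attached at u, the far endpoint of g
      subst hcu
      rcases tree_dist_succ hT hcz x with hxz | hxz
      · -- d(x,z) = n+2 : produce the answer
        rw [hxu] at hxz
        have htri := hC.dist_triangle (u := x) (v := x') (w := z)
        rw [dist_eq_one_iff_adj.mpr hxx', hxz] at htri
        have hx'z : T.dist x' z = n + 1 := by
          rcases tree_dist_succ hT hcz x' with h5 | h5 <;> rw [hx'u] at h5 <;> omega
        refine ⟨x, x', z, c, hxx', hcz.symm, hex, ?_, hxz, hx'z, by rw [dist_comm]; exact hxu⟩
        rw [Sym2.eq_swap]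
        exact hz.symm
      · -- d(x,z) = n : impossible
        rw [hxu] at hxz
        have hxzn : T.dist x z = n := by omega
        exfalso
        rcases Nat.eq_zero_or_pos n with h0 | hpos
        · subst h0
          have hzx : x = z := (hC.dist_eq_zero_iff).mp hxzn
          have hx'c : x' = c := (hC.dist_eq_zero_iff).mp hx'u
          apply hef
          apply Subtype.ext
          rw [← hex, hz, ← hzx, hx'c, Sym2.eq_swap]
        · rcases tree_dist_succ hT hxx' z with h5 | h5
          · -- d(z,x') = n+1 : quad contradiction
            rw [dist_comm (u := z) (v := x), hxzn] at h5
            exact tree_quad hT hpos hxx'.symm hcz hxzn hx'u hxu (by rw [dist_comm]; exact h5)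
          · -- d(x',z) = n-1 : contradicts line distance
            rw [dist_comm (u := z) (v := x), hxzn, dist_comm (u := z) (v := x')] at h5
            obtain ⟨r, hr, hrl⟩ := hC.exists_path_of_dist x' z
            have hb := line_dist_le hL r e f
              (by rw [← hex]; exact Sym2.mem_mk_right x x')
              (by rw [hz]; exact Sym2.mem_mk_right c z)
            rw [hd, hrl] at hb
            omega
    · -- f is attached at u', the near endpoint of g
      subst hcu'
      rcases Nat.eq_zero_or_pos n with h0 | hpos
      · subst h0
        have hcx : c = x := (hC.dist_eq_zero_iff).mp hu'x
        rw [hcx] at hz hcz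
        have hzx' : z ≠ x' := by
          intro h
          apply hef
          apply Subtype.ext
          rw [← hex, hz, h, Sym2.eq_swap]
        have hxx1 : T.dist x' x = 1 := by
          rw [dist_comm (u := x') (v := x)]
          exact dist_eq_one_iff_adj.mpr hxx'
        have hx'z : T.dist x' z = 2 := by
          rcases tree_dist_succ hT hcz x' with h5 | h5
          · rw [hxx1] at h5
            exact h5
          · rw [hxx1] at h5
            have h6 : T.dist x' z = 0 := by omega
            exact absurd ((hC.dist_eq_zero_iff).mp h6).symm hzx'
        exact ⟨x', x, z, x, hxx'.symm, hcz.symm, by rw [Sym2.eq_swap]; exact hex,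
          by rw [Sym2.eq_swap]; exact hz.symm, hx'z, dist_eq_one_iff_adj.mpr hcz,
          dist_eq_one_iff_adj.mpr hxx'⟩
      · exfalso
        rcases tree_dist_succ hT huu' x' with h5 | h5
        · -- d(x',u') = n+1 : quad contradiction
          rw [hx'u] at h5
          exact tree_quad hT hpos hxx'.symm huu' (by rw [dist_comm]; exact hu'x) hx'u hxu h5
        · -- d(x',u') = n-1 : contradicts line distance
          rw [hx'u] at h5
          obtain ⟨r, hr, hrl⟩ := hC.exists_path_of_dist x' c
          have hb := line_dist_le hL r e f
            (by rw [← hex]; exact Sym2.mem_mk_right x x')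
            (by rw [hz]; exact Sym2.mem_mk_left c z)
          rw [hd, hrl] at hb
          omega

end SimpleGraph

/-- Surjectivity of the map `F`: every unordered pair of edges at
line-graph distance `k - 1` arises as the pair of end edges of the path between
some endpoints `x, y` at distance `k`. -/
theorem stmt19 {V : Type*} (T : SimpleGraph V) (hT : T.IsTree)
    (k : ℕ) (hk : 1 ≤ k) (e f : T.edgeSet)
    (hd : T.lineGraph.dist e f = k - 1) :
    ∃ x y x' y' : V, x ∈ (e : Sym2 V) ∧ y ∈ (f : Sym2 V) ∧ T.dist x y = k ∧
      T.Adj x x' ∧ T.dist x' y = k - 1 ∧ s(x, x') = (e : Sym2 V) ∧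
      T.Adj y y' ∧ T.dist y' x = k - 1 ∧ s(y, y') = (f : Sym2 V) := by
  obtain ⟨x, x', y, y', hxx', hyy', hex, hfy, hxy, hx'y, hy'x⟩ :=
    SimpleGraph.key hT (k - 1) e f hd
  refine ⟨x, y, x', y', ?_, ?_, ?_, hxx', hx'y, hex, hyy', hy'x, hfy⟩
  · rw [← hex]; exact Sym2.mem_mk_left x x'
  · rw [← hfy]; exact Sym2.mem_mk_left y y'
  · rw [hxy]; omega
end
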